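/- arXiv:2509.24600 — 4 statements merged into one kernel-verified Lean document; each statement's English description precedes it below -/
import Mathlib

section
/- For every odd k ≥ 5, the independence number of the second strong power of the k-cycle satisfies α(C_k^2) = ((k−1)/2)² + ⌊(k−1)/4⌋ > α(C_k)², and hence Θ(C_k) > α(C_k). -/
namespace Paper

def strongProd {V W : Type*} (G : SimpleGraph V) (H : SimpleGraph W) : SimpleGraph (V × W) :=
  SimpleGraph.fromRel (fun x y =>
    (x.1 = y.1 ∨ G.Adj x.1 y.1) ∧ (x.2 = y.2 ∨ H.Adj x.2 y.2))

def strongPow {V : Type*} (G : SimpleGraph V) (k : ℕ) : SimpleGraph (Fin k → V) :=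
  SimpleGraph.fromRel (fun x y => ∀ i, x i = y i ∨ G.Adj (x i) (y i))

noncomputable def indepNum {V : Type*} [Fintype V] (G : SimpleGraph V) : ℕ :=
  sSup {n | ∃ s : Finset V, (∀ a ∈ s, ∀ b ∈ s, a ≠ b → ¬ G.Adj a b) ∧ s.card = n}

noncomputable def shannonCapacity {V : Type*} [Fintype V] (G : SimpleGraph V) : ℝ :=
  ⨆ k : ℕ, (indepNum (strongPow G (k + 1)) : ℝ) ^ ((1 : ℝ) / (k + 1))

noncomputable def lovaszTheta {V : Type*} [Fintype V] (G : SimpleGraph V) : ℝ :=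
  sSup {x : ℝ | ∃ B : Matrix V V ℝ, B.PosSemidef ∧ B.trace = 1 ∧
    (∀ i j, G.Adj i j → B i j = 0) ∧ x = ∑ i, ∑ j, B i j}

noncomputable def fracIndepNum {V : Type*} [Fintype V] (G : SimpleGraph V) : ℝ :=
  sSup {x : ℝ | ∃ f : V → ℝ, (∀ v, 0 ≤ f v) ∧
    (∀ s : Finset V, G.IsClique (s : Set V) → ∑ v ∈ s, f v ≤ 1) ∧ x = ∑ v, f v}

def Universal {V : Type*} [Fintype V] (G : SimpleGraph V) : Prop :=
  ∀ (W : Type) [Fintype W] (H : SimpleGraph W),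
    indepNum (strongProd G H) = indepNum G * indepNum H

def sigmaUnion {ι : Type*} {V : ι → Type*} (G : ∀ i, SimpleGraph (V i)) :
    SimpleGraph (Σ i, V i) :=
  SimpleGraph.fromRel (fun x y =>
    ∃ i, ∃ a b : V i, (G i).Adj a b ∧ x = ⟨i, a⟩ ∧ y = ⟨i, b⟩)

def piStrongProd {ι : Type*} {V : ι → Type*} (G : ∀ i, SimpleGraph (V i)) :
    SimpleGraph (∀ i, V i) :=
  SimpleGraph.fromRel (fun x y => ∀ i, x i = y i ∨ (G i).Adj (x i) (y i))

def tadpole (k l : ℕ) : SimpleGraph (Fin (k + l)) :=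
  SimpleGraph.fromRel (fun x y =>
    ((x : ℕ) < k ∧ (y : ℕ) < k ∧ ((x : ℕ) + 1) % k = (y : ℕ)) ∨
    (k ≤ (x : ℕ) ∧ (y : ℕ) = (x : ℕ) + 1) ∨
    ((x : ℕ) = 0 ∧ (y : ℕ) = k))

def IndepOn {V : Type*} (G : SimpleGraph V) (s : Finset V) : Prop :=
  ∀ a ∈ s, ∀ b ∈ s, a ≠ b → ¬ G.Adj a b

lemma indepNum_le {V : Type*} [Fintype V] (G : SimpleGraph V) (B : ℕ)
    (h : ∀ s : Finset V, IndepOn G s → s.card ≤ B) : indepNum G ≤ B := by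
  refine csSup_le ⟨0, ∅, by simp, by simp⟩ ?_
  rintro x ⟨s, hs, rfl⟩
  exact h s hs

lemma le_indepNum {V : Type*} [Fintype V] (G : SimpleGraph V) (s : Finset V)
    (hs : IndepOn G s) : s.card ≤ indepNum G := by
  refine le_csSup ⟨Fintype.card V, ?_⟩ ⟨s, hs, rfl⟩
  rintro x ⟨t, ht, rfl⟩
  exact Finset.card_le_univ t

-- mod helper
lemma mod3k {k x : ℕ} (h0 : 0 < k) (h : x < 3*k) :
    (x % k = x ∨ (k ≤ x ∧ x % k + k = x) ∨ (2*k ≤ x ∧ x % k + 2*k = x)) ∧ x % k < k := by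
  refine ⟨?_, Nat.mod_lt _ h0⟩
  rcases Nat.lt_or_ge x k with h1 | h1
  · exact Or.inl (Nat.mod_eq_of_lt h1)
  rcases Nat.lt_or_ge x (2*k) with h2 | h2
  · refine Or.inr (Or.inl ⟨h1, ?_⟩)
    rw [Nat.mod_eq_sub_mod h1, Nat.mod_eq_of_lt (by omega)]; omega
  · refine Or.inr (Or.inr ⟨h2, ?_⟩)
    rw [Nat.mod_eq_sub_mod h1, Nat.mod_eq_sub_mod (by omega), Nat.mod_eq_of_lt (by omega)]
    omega

-- cycle adjacency in nat terms
lemma sub_val_one_iff {k : ℕ} (hk : 2 ≤ k) (a b : Fin k) :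
    (a - b).val = 1 ↔ (a.val = b.val + 1 ∨ (b.val = k - 1 ∧ a.val = 0)) := by
  rw [Fin.sub_def]
  simp only []
  have ha := a.isLt; have hb := b.isLt
  rcases Nat.lt_or_ge (k - b.val + a.val) k with h | h
  · rw [Nat.mod_eq_of_lt h]; omega
  · rw [Nat.mod_eq_sub_mod h, Nat.mod_eq_of_lt (by omega)]; omega

lemma cycleAdj {k : ℕ} (hk : 5 ≤ k) (a b : Fin k) :
    (SimpleGraph.cycleGraph k).Adj a b ↔
      (a.val = b.val + 1 ∨ b.val = a.val + 1 ∨ (b.val = k - 1 ∧ a.val = 0) ∨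
        (a.val = k - 1 ∧ b.val = 0)) := by
  rw [SimpleGraph.cycleGraph_adj', sub_val_one_iff (by omega), sub_val_one_iff (by omega)]
  tauto

lemma adj_succ {k : ℕ} [NeZero k] (hk : 5 ≤ k) (i : Fin k) :
    i ≠ i + 1 ∧ (SimpleGraph.cycleGraph k).Adj i (i + 1) := by
  have h1 : ((1 : Fin k)).val = 1 := by
    rw [Fin.val_one']; exact Nat.mod_eq_of_lt (by omega)
  have e : (i + 1) - i = 1 := by abel
  refine ⟨?_, ?_⟩
  · intro h
    rw [left_eq_add] at h
    have := congrArg Fin.val h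
    rw [h1] at this
    simp at this
  · rw [SimpleGraph.cycleGraph_adj']
    exact Or.inr (by rw [e, h1])

lemma alpha_cycle_le {k : ℕ} [NeZero k] (hk : 5 ≤ k) (hodd : Odd k) (s : Finset (Fin k))
    (hs : IndepOn (SimpleGraph.cycleGraph k) s) : s.card ≤ (k - 1) / 2 := by
  classical
  set t := s.image (fun v => v + 1) with ht
  have hcard : t.card = s.card :=
    Finset.card_image_of_injective s (add_left_injective 1)
  have hdisj : Disjoint s t := by
    rw [Finset.disjoint_left]
    intro v hv hvt
    rw [ht, Finset.mem_image] at hvt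
    obtain ⟨w, hw, rfl⟩ := hvt
    obtain ⟨hne, hadj⟩ := adj_succ hk w
    exact hs w hw (w + 1) hv hne hadj
  have hu : (s ∪ t).card = s.card + t.card := Finset.card_union_of_disjoint hdisj
  have hle : (s ∪ t).card ≤ k := by
    have := Finset.card_le_univ (s ∪ t)
    simpa using this
  obtain ⟨K, hK⟩ := hodd
  omega

lemma alpha_cycle_ge {k : ℕ} (hk : 5 ≤ k) (hodd : Odd k) :
    ∃ s : Finset (Fin k), IndepOn (SimpleGraph.cycleGraph k) s ∧ s.card = (k - 1) / 2 := by
  classical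
  obtain ⟨K, hK⟩ := hodd
  refine ⟨(Finset.range ((k - 1) / 2)).image
    (fun j => (⟨2 * j % k, Nat.mod_lt _ (by omega)⟩ : Fin k)), ?_, ?_⟩
  · intro a ha b hb hne hadj
    rw [Finset.mem_image] at ha hb
    obtain ⟨j, hj, rfl⟩ := ha
    obtain ⟨j', hj', rfl⟩ := hb
    rw [Finset.mem_range] at hj hj'
    rw [cycleAdj hk] at hadj
    simp only [] at hadj
    rw [Nat.mod_eq_of_lt (by omega), Nat.mod_eq_of_lt (by omega)] at hadj
    omega
  · rw [Finset.card_image_of_injOn, Finset.card_range]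
    intro j hj j' hj' hee
    rw [Finset.mem_coe, Finset.mem_range] at hj hj'
    have := congrArg Fin.val hee
    simp only [] at this
    rw [Nat.mod_eq_of_lt (by omega), Nat.mod_eq_of_lt (by omega)] at this
    omega

lemma strongProdAdj {V : Type*} (G : SimpleGraph V) (p q : V × V) :
    (strongProd G G).Adj p q ↔
      p ≠ q ∧ (p.1 = q.1 ∨ G.Adj p.1 q.1) ∧ (p.2 = q.2 ∨ G.Adj p.2 q.2) := by
  unfold strongProd
  rw [SimpleGraph.fromRel_adj]
  constructor
  · rintro ⟨h, ⟨h1, h2⟩ | ⟨h1, h2⟩⟩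
    · exact ⟨h, h1, h2⟩
    · refine ⟨h, ?_, ?_⟩
      · rcases h1 with h' | h'
        · exact Or.inl h'.symm
        · exact Or.inr h'.symm
      · rcases h2 with h' | h'
        · exact Or.inl h'.symm
        · exact Or.inr h'.symm
  · rintro ⟨h, h1, h2⟩
    exact ⟨h, Or.inl ⟨h1, h2⟩⟩

lemma prod_card_le [NeZero k] (hk : 5 ≤ k) (hodd : Odd k)
    (S : Finset (Fin k × Fin k))
    (hS : IndepOn (strongProd (SimpleGraph.cycleGraph k) (SimpleGraph.cycleGraph k)) S) :
    S.card ≤ ((k - 1) / 2) ^ 2 + (k - 1) / 4 := by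
  classical
  set n := (k - 1) / 2 with hn
  have key : ∀ i : Fin k,
      (S.filter (fun p => p.1 = i)).card + (S.filter (fun p => p.1 = i + 1)).card ≤ n := by
    intro i
    obtain ⟨hne1, hadj1⟩ := adj_succ hk i
    set u := S.filter (fun p => p.1 = i ∨ p.1 = i + 1) with hu
    have hmem : ∀ p ∈ u, p ∈ S ∧ (p.1 = i ∨ p.1 = i + 1) := by
      intro p hp; rw [hu, Finset.mem_filter] at hp; exact hp
    have hcard : u.card
        = (S.filter (fun p => p.1 = i)).card + (S.filter (fun p => p.1 = i + 1)).card := by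
      rw [hu, Finset.filter_or]
      apply Finset.card_union_of_disjoint
      rw [Finset.disjoint_left]
      intro p hp hp'
      rw [Finset.mem_filter] at hp hp'
      exact hne1 (hp.2 ▸ hp'.2)
    -- adjacency between any rows i, i+1 entries with close columns
    have hadjrows : ∀ p ∈ u, ∀ q ∈ u, p ≠ q →
        (q.2 = p.2 ∨ (SimpleGraph.cycleGraph k).Adj p.2 q.2) → False := by
      intro p hp q hq hpq h2
      obtain ⟨hpS, hp1⟩ := hmem p hp
      obtain ⟨hqS, hq1⟩ := hmem q hq
      apply hS p hpS q hqS hpq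
      rw [strongProdAdj]
      refine ⟨hpq, ?_, ?_⟩
      · rcases hp1 with h | h <;> rcases hq1 with h' | h'
        · exact Or.inl (h.trans h'.symm)
        · exact Or.inr (by rw [h, h']; exact hadj1)
        · exact Or.inr (by rw [h, h']; exact (SimpleGraph.adj_symm _ hadj1))
        · exact Or.inl (h.trans h'.symm)
      · rcases h2 with h | h
        · exact Or.inl h.symm
        · exact Or.inr h
    have hinj : Set.InjOn Prod.snd (u : Set (Fin k × Fin k)) := by
      intro p hp q hq h2
      rw [Finset.mem_coe] at hp hq
      by_contra hpq
      exact hadjrows p hp q hq hpq (Or.inl h2.symm)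
    have himg : (u.image Prod.snd).card = u.card := Finset.card_image_of_injOn hinj
    have hindimg : IndepOn (SimpleGraph.cycleGraph k) (u.image Prod.snd) := by
      intro a ha b hb hab hadj
      rw [Finset.mem_image] at ha hb
      obtain ⟨p, hp, rfl⟩ := ha
      obtain ⟨q, hq, rfl⟩ := hb
      have hpq : p ≠ q := fun h => hab (by rw [h])
      exact hadjrows p hp q hq hpq (Or.inr hadj)
    have := alpha_cycle_le hk hodd _ hindimg
    omega
  have h1 : ∑ i : Fin k, (S.filter (fun p => p.1 = i)).card = S.card :=
    (Finset.card_eq_sum_card_fiberwise (fun x _ => Finset.mem_univ x.1)).symm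
  have h2 : ∑ i : Fin k, (S.filter (fun p => p.1 = i + 1)).card = S.card := by
    rw [← h1]
    exact Fintype.sum_equiv (Equiv.addRight (1 : Fin k)) _ _ (fun i => rfl)
  have hsum : 2 * S.card ≤ k * n := by
    have := Finset.sum_le_sum (fun i (_ : i ∈ Finset.univ) => key i)
    rw [Finset.sum_add_distrib, h1, h2, Finset.sum_const, Finset.card_univ,
      Fintype.card_fin, smul_eq_mul] at this
    omega
  obtain ⟨K, hK⟩ := hodd
  have hnk : k = 2 * n + 1 := by omega
  have hkn : k * n = 2 * (n * n) + n := by rw [hnk]; ring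
  have hsq : n ^ 2 = n * n := sq n
  omega

lemma lower1 (m : ℕ) (hm : 1 ≤ m) :
    ∃ S : Finset (Fin (4*m+1) × Fin (4*m+1)),
      IndepOn (strongProd (SimpleGraph.cycleGraph (4*m+1)) (SimpleGraph.cycleGraph (4*m+1))) S
      ∧ S.card = (4*m+1) * m := by
  classical
  set k := 4*m+1 with hkdef
  have hk5 : 5 ≤ k := by omega
  have hk0 : 0 < k := by omega
  refine ⟨((Finset.range k) ×ˢ (Finset.range m)).image
    (fun it => ((⟨it.1 % k, Nat.mod_lt _ hk0⟩ : Fin k),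
                (⟨(2*it.1 + 4*it.2) % k, Nat.mod_lt _ hk0⟩ : Fin k))), ?_, ?_⟩
  · rintro a ha b hb hne hadj
    rw [Finset.mem_image] at ha hb
    obtain ⟨⟨i, t⟩, hmem, rfl⟩ := ha
    obtain ⟨⟨i', t'⟩, hmem', rfl⟩ := hb
    rw [Finset.mem_product, Finset.mem_range, Finset.mem_range] at hmem hmem'
    obtain ⟨hi, ht⟩ := hmem
    obtain ⟨hi', ht'⟩ := hmem'
    dsimp only at *
    rw [strongProdAdj] at hadj
    obtain ⟨-, h1, h2⟩ := hadj
    rw [Fin.mk.injEq, cycleAdj hk5] at h1 h2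
    simp only [Fin.val_mk] at h1 h2
    have e1 : i % k = i := Nat.mod_eq_of_lt hi
    have e2 : i' % k = i' := Nat.mod_eq_of_lt hi'
    obtain ⟨f1, g1⟩ := mod3k hk0 (x := 2*i + 4*t) (by omega)
    obtain ⟨f2, g2⟩ := mod3k hk0 (x := 2*i' + 4*t') (by omega)
    apply hne
    rw [Prod.ext_iff, Fin.mk.injEq, Fin.mk.injEq]
    constructor <;> omega
  · rw [Finset.card_image_of_injOn, Finset.card_product, Finset.card_range,
      Finset.card_range]
    intro p hp q hq heq
    rw [Finset.mem_coe, Finset.mem_product, Finset.mem_range, Finset.mem_range] at hp hq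
    rw [Prod.ext_iff, Fin.mk.injEq, Fin.mk.injEq] at heq
    obtain ⟨u1, u2⟩ := heq
    have e1 : p.1 % k = p.1 := Nat.mod_eq_of_lt hp.1
    have e2 : q.1 % k = q.1 := Nat.mod_eq_of_lt hq.1
    obtain ⟨f1, g1⟩ := mod3k hk0 (x := 2*p.1 + 4*p.2) (by omega)
    obtain ⟨f2, g2⟩ := mod3k hk0 (x := 2*q.1 + 4*q.2) (by omega)
    have : p.1 = q.1 ∧ p.2 = q.2 := by constructor <;> omega
    exact Prod.ext this.1 this.2

def vtx (k : ℕ) (hk : 0 < k) (x y : ℕ) : Fin k × Fin k :=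
  (⟨x % k, Nat.mod_lt _ hk⟩, ⟨y % k, Nat.mod_lt _ hk⟩)

lemma vtx_fst (k : ℕ) (hk : 0 < k) (x y : ℕ) : (vtx k hk x y).1.val = x % k := rfl
lemma vtx_snd (k : ℕ) (hk : 0 < k) (x y : ℕ) : (vtx k hk x y).2.val = y % k := rfl

lemma lower3 (m : ℕ) (hm : 1 ≤ m) :
    ∃ S : Finset (Fin (4*m+3) × Fin (4*m+3)),
      IndepOn (strongProd (SimpleGraph.cycleGraph (4*m+3)) (SimpleGraph.cycleGraph (4*m+3))) S
      ∧ S.card = (2*m+2) * m + (2*m+1) * (m+1) := by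
  classical
  set k := 4*m+3 with hkdef
  have hk5 : 5 ≤ k := by omega
  have hk0 : 0 < k := by omega
  set SA := ((Finset.range (2*m+2)) ×ˢ (Finset.range m)).image
    (fun jt => vtx k hk0 (2*jt.1) (jt.1 + 2*jt.2)) with hSA
  set SB := ((Finset.range (2*m+1)) ×ˢ (Finset.range (m+1))).image
    (fun jt => vtx k hk0 (2*jt.1 + 1) (jt.1 + 2*m+1 + 2*jt.2)) with hSB
  have memA : ∀ a ∈ SA, ∃ j t, j < 2*m+2 ∧ t < m ∧ a = vtx k hk0 (2*j) (j + 2*t) := by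
    intro a ha
    rw [hSA, Finset.mem_image] at ha
    obtain ⟨⟨j, t⟩, hmem, rfl⟩ := ha
    rw [Finset.mem_product, Finset.mem_range, Finset.mem_range] at hmem
    exact ⟨j, t, hmem.1, hmem.2, rfl⟩
  have memB : ∀ a ∈ SB, ∃ j t, j < 2*m+1 ∧ t < m+1 ∧ a = vtx k hk0 (2*j+1) (j + 2*m+1 + 2*t) := by
    intro a ha
    rw [hSB, Finset.mem_image] at ha
    obtain ⟨⟨j, t⟩, hmem, rfl⟩ := ha
    rw [Finset.mem_product, Finset.mem_range, Finset.mem_range] at hmem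
    exact ⟨j, t, hmem.1, hmem.2, rfl⟩
  have hcA : ∀ a ∈ SA, ∃ j t, j < 2*m+2 ∧ t < m ∧
      a.1.val = (2*j) % k ∧ a.2.val = (j + 2*t) % k := by
    intro a ha
    obtain ⟨j, t, hj, ht, rfl⟩ := memA a ha
    exact ⟨j, t, hj, ht, rfl, rfl⟩
  have hcB : ∀ a ∈ SB, ∃ j t, j < 2*m+1 ∧ t < m+1 ∧
      a.1.val = (2*j+1) % k ∧ a.2.val = (j + 2*m+1 + 2*t) % k := by
    intro a ha
    obtain ⟨j, t, hj, ht, rfl⟩ := memB a ha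
    exact ⟨j, t, hj, ht, rfl, rfl⟩
  refine ⟨SA ∪ SB, ?_, ?_⟩
  · rintro a ha b hb hne hadj
    rw [strongProdAdj] at hadj
    obtain ⟨-, h1, h2⟩ := hadj
    rw [Finset.mem_union] at ha hb
    have hne' : ¬ (a.1.val = b.1.val ∧ a.2.val = b.2.val) := by
      intro hv
      exact hne (Prod.ext (Fin.ext hv.1) (Fin.ext hv.2))
    rw [Fin.ext_iff, cycleAdj hk5] at h1
    rw [Fin.ext_iff, cycleAdj hk5] at h2
    rcases ha with ha | ha <;> rcases hb with hb | hb
    · obtain ⟨j, t, hj, ht, e1, e2⟩ := hcA a ha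
      obtain ⟨j', t', hj', ht', e3, e4⟩ := hcA b hb
      obtain ⟨u1, w1⟩ := mod3k (x := 2*j) hk0 (by omega)
      obtain ⟨u2, w2⟩ := mod3k (x := 2*j') hk0 (by omega)
      obtain ⟨u3, w3⟩ := mod3k (x := j + 2*t) hk0 (by omega)
      obtain ⟨u4, w4⟩ := mod3k (x := j' + 2*t') hk0 (by omega)
      omega
    · obtain ⟨j, t, hj, ht, e1, e2⟩ := hcA a ha
      obtain ⟨j', t', hj', ht', e3, e4⟩ := hcB b hb
      obtain ⟨u1, w1⟩ := mod3k (x := 2*j) hk0 (by omega)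
      obtain ⟨u2, w2⟩ := mod3k (x := 2*j' + 1) hk0 (by omega)
      obtain ⟨u3, w3⟩ := mod3k (x := j + 2*t) hk0 (by omega)
      obtain ⟨u4, w4⟩ := mod3k (x := j' + 2*m+1 + 2*t') hk0 (by omega)
      omega
    · obtain ⟨j, t, hj, ht, e1, e2⟩ := hcB a ha
      obtain ⟨j', t', hj', ht', e3, e4⟩ := hcA b hb
      obtain ⟨u1, w1⟩ := mod3k (x := 2*j + 1) hk0 (by omega)
      obtain ⟨u2, w2⟩ := mod3k (x := 2*j') hk0 (by omega)
      obtain ⟨u3, w3⟩ := mod3k (x := j + 2*m+1 + 2*t) hk0 (by omega)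
      obtain ⟨u4, w4⟩ := mod3k (x := j' + 2*t') hk0 (by omega)
      omega
    · obtain ⟨j, t, hj, ht, e1, e2⟩ := hcB a ha
      obtain ⟨j', t', hj', ht', e3, e4⟩ := hcB b hb
      obtain ⟨u1, w1⟩ := mod3k (x := 2*j + 1) hk0 (by omega)
      obtain ⟨u2, w2⟩ := mod3k (x := 2*j' + 1) hk0 (by omega)
      obtain ⟨u3, w3⟩ := mod3k (x := j + 2*m+1 + 2*t) hk0 (by omega)
      obtain ⟨u4, w4⟩ := mod3k (x := j' + 2*m+1 + 2*t') hk0 (by omega)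
      omega
  · rw [Finset.card_union_of_disjoint, hSA, hSB,
      Finset.card_image_of_injOn, Finset.card_image_of_injOn,
      Finset.card_product, Finset.card_product]
    · simp [Finset.card_range]
    · intro p hp q hq heq
      rw [Finset.mem_coe, Finset.mem_product, Finset.mem_range, Finset.mem_range] at hp hq
      have e1 := congrArg (fun z => z.1.val) heq
      have e2 := congrArg (fun z => z.2.val) heq
      simp only [vtx_fst, vtx_snd] at e1 e2
      obtain ⟨u1, w1⟩ := mod3k (x := 2*p.1 + 1) hk0 (by omega)
      obtain ⟨u2, w2⟩ := mod3k (x := 2*q.1 + 1) hk0 (by omega)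
      obtain ⟨u3, w3⟩ := mod3k (x := p.1 + 2*m+1 + 2*p.2) hk0 (by omega)
      obtain ⟨u4, w4⟩ := mod3k (x := q.1 + 2*m+1 + 2*q.2) hk0 (by omega)
      have : p.1 = q.1 ∧ p.2 = q.2 := by omega
      exact Prod.ext this.1 this.2
    · intro p hp q hq heq
      rw [Finset.mem_coe, Finset.mem_product, Finset.mem_range, Finset.mem_range] at hp hq
      have e1 := congrArg (fun z => z.1.val) heq
      have e2 := congrArg (fun z => z.2.val) heq
      simp only [vtx_fst, vtx_snd] at e1 e2
      obtain ⟨u1, w1⟩ := mod3k (x := 2*p.1) hk0 (by omega)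
      obtain ⟨u2, w2⟩ := mod3k (x := 2*q.1) hk0 (by omega)
      obtain ⟨u3, w3⟩ := mod3k (x := p.1 + 2*p.2) hk0 (by omega)
      obtain ⟨u4, w4⟩ := mod3k (x := q.1 + 2*q.2) hk0 (by omega)
      have : p.1 = q.1 ∧ p.2 = q.2 := by omega
      exact Prod.ext this.1 this.2
    · rw [Finset.disjoint_left]
      intro a haA haB
      obtain ⟨j, t, hj, ht, e1, e2⟩ := hcA a haA
      obtain ⟨j', t', hj', ht', e3, e4⟩ := hcB a haB
      obtain ⟨u1, w1⟩ := mod3k (x := 2*j) hk0 (by omega)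
      obtain ⟨u2, w2⟩ := mod3k (x := 2*j' + 1) hk0 (by omega)
      omega

lemma indepNum_le_equiv {V W : Type*} [Fintype V] [Fintype W] [DecidableEq W]
    (e : V ≃ W) (G : SimpleGraph V) (H : SimpleGraph W)
    (h : ∀ a b, H.Adj (e a) (e b) → G.Adj a b) : indepNum G ≤ indepNum H := by
  refine csSup_le ⟨0, ∅, by simp, by simp⟩ ?_
  rintro x ⟨s, hs, rfl⟩
  have hind : IndepOn H (s.image e) := by
    intro a ha b hb hab hadj
    rw [Finset.mem_image] at ha hb
    obtain ⟨x, hx, rfl⟩ := ha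
    obtain ⟨y, hy, rfl⟩ := hb
    exact hs x hx y hy (fun hxy => hab (by rw [hxy])) (h x y hadj)
  have := le_indepNum H (s.image e) hind
  rwa [Finset.card_image_of_injective _ e.injective] at this

lemma indepNum_equiv {V W : Type*} [Fintype V] [Fintype W] [DecidableEq V] [DecidableEq W]
    (e : V ≃ W) (G : SimpleGraph V) (H : SimpleGraph W)
    (h : ∀ a b, G.Adj a b ↔ H.Adj (e a) (e b)) : indepNum G = indepNum H := by
  refine le_antisymm (indepNum_le_equiv e G H (fun a b hab => (h a b).2 hab)) ?_
  refine indepNum_le_equiv e.symm H G (fun a b hab => ?_)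
  have := (h (e.symm a) (e.symm b)).1 hab
  simpa using this

lemma strongPow_two_eq {V : Type*} [Fintype V] [DecidableEq V] (G : SimpleGraph V) :
    indepNum (strongPow G 2) = indepNum (strongProd G G) := by
  refine indepNum_equiv (piFinTwoEquiv (fun _ => V)) _ _ (fun x y => ?_)
  unfold strongPow strongProd
  rw [SimpleGraph.fromRel_adj, SimpleGraph.fromRel_adj]
  simp only [piFinTwoEquiv_apply, Fin.forall_fin_two, ne_eq, Prod.mk.injEq, not_and,
    Prod.ext_iff]
  constructor
  · rintro ⟨hne, hr⟩
    refine ⟨?_, ?_⟩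
    · intro h0 h1
      apply hne
      funext i
      fin_cases i
      · exact h0
      · exact h1
    · tauto
  · rintro ⟨hne, hr⟩
    refine ⟨?_, ?_⟩
    · intro hxy
      exact hne (by rw [hxy]) (by rw [hxy])
    · tauto

lemma capacity_gt {V : Type*} [Fintype V] [DecidableEq V] (G : SimpleGraph V)
    (h : indepNum G ^ 2 < indepNum (strongProd G G)) :
    (indepNum G : ℝ) < shannonCapacity G := by
  have hb : BddAbove (Set.range fun k : ℕ =>
      (indepNum (strongPow G (k + 1)) : ℝ) ^ ((1 : ℝ) / (k + 1))) := by
    refine ⟨(Fintype.card V : ℝ), ?_⟩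
    rintro x ⟨k, rfl⟩
    have h1 : indepNum (strongPow G (k + 1)) ≤ Fintype.card V ^ (k + 1) := by
      have h2 := indepNum_le (strongPow G (k + 1)) (Fintype.card (Fin (k + 1) → V))
        (fun s _ => le_trans (Finset.card_le_univ s) (le_of_eq (Finset.card_univ)))
      rwa [Fintype.card_fun, Fintype.card_fin] at h2
    have h2 : ((indepNum (strongPow G (k + 1)) : ℝ)) ≤ (Fintype.card V : ℝ) ^ (k + 1) := by
      exact_mod_cast h1
    have h3 : ((0:ℝ)) ≤ (Fintype.card V : ℝ) := by positivity
    have h4 : (0:ℝ) < 1 / ((k : ℝ) + 1) := by positivity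
    calc (indepNum (strongPow G (k + 1)) : ℝ) ^ ((1 : ℝ) / (k + 1))
        ≤ ((Fintype.card V : ℝ) ^ (k + 1)) ^ ((1 : ℝ) / (k + 1)) :=
          Real.rpow_le_rpow (by positivity) h2 (le_of_lt h4)
      _ = (Fintype.card V : ℝ) := by
          rw [← Real.rpow_natCast (Fintype.card V : ℝ) (k + 1), ← Real.rpow_mul h3]
          rw [show ((k + 1 : ℕ) : ℝ) * ((1 : ℝ) / (k + 1)) = 1 by
            push_cast
            field_simp]
          exact Real.rpow_one _
  have hkey : (indepNum G : ℝ) < (indepNum (strongPow G 2) : ℝ) ^ ((1 : ℝ) / 2) := by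
    have hlt : ((indepNum G : ℝ)) ^ (2 : ℕ) < (indepNum (strongPow G 2) : ℝ) := by
      rw [strongPow_two_eq]
      exact_mod_cast h
    have ha : (0:ℝ) ≤ (indepNum G : ℝ) := by positivity
    have := Real.rpow_lt_rpow (by positivity) hlt (by norm_num : (0:ℝ) < 1/2)
    calc (indepNum G : ℝ)
        = (((indepNum G : ℝ)) ^ (2 : ℕ)) ^ ((1 : ℝ) / 2) := by
          rw [← Real.rpow_natCast (indepNum G : ℝ) 2, ← Real.rpow_mul ha]
          norm_num
      _ < (indepNum (strongPow G 2) : ℝ) ^ ((1 : ℝ) / 2) := this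
  have hle : (indepNum (strongPow G (1 + 1)) : ℝ) ^ ((1 : ℝ) / ((1:ℕ) + 1))
      ≤ shannonCapacity G := le_ciSup hb 1
  have heq : (indepNum (strongPow G (1 + 1)) : ℝ) ^ ((1 : ℝ) / ((1:ℕ) + 1))
      = (indepNum (strongPow G 2) : ℝ) ^ ((1 : ℝ) / 2) := by norm_num
  rw [heq] at hle
  exact lt_of_lt_of_le hkey hle

theorem indepNum_cycle_strong_square (k : ℕ) (hk : 5 ≤ k) (hodd : Odd k) :
    indepNum (strongProd (SimpleGraph.cycleGraph k) (SimpleGraph.cycleGraph k))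
      = ((k - 1) / 2) ^ 2 + (k - 1) / 4 ∧
    indepNum (SimpleGraph.cycleGraph k) ^ 2
      < indepNum (strongProd (SimpleGraph.cycleGraph k) (SimpleGraph.cycleGraph k)) ∧
    (indepNum (SimpleGraph.cycleGraph k) : ℝ) < shannonCapacity (SimpleGraph.cycleGraph k) := by
  haveI : NeZero k := ⟨by omega⟩
  obtain ⟨K, hK⟩ := hodd
  have hoddk : Odd k := ⟨K, hK⟩
  have hcyc : indepNum (SimpleGraph.cycleGraph k) = (k - 1) / 2 := by
    refine le_antisymm (indepNum_le _ _ (fun s hs => alpha_cycle_le hk hoddk s hs)) ?_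
    obtain ⟨s, hs, hcard⟩ := alpha_cycle_ge hk hoddk
    rw [← hcard]
    exact le_indepNum _ _ hs
  have hupper : indepNum (strongProd (SimpleGraph.cycleGraph k) (SimpleGraph.cycleGraph k))
      ≤ ((k - 1) / 2) ^ 2 + (k - 1) / 4 :=
    indepNum_le _ _ (fun S hS => prod_card_le hk hoddk S hS)
  have hlower : ((k - 1) / 2) ^ 2 + (k - 1) / 4
      ≤ indepNum (strongProd (SimpleGraph.cycleGraph k) (SimpleGraph.cycleGraph k)) := by
    have h4 : k % 4 = 1 ∨ k % 4 = 3 := by omega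
    rcases h4 with h4 | h4
    · obtain ⟨m, rfl⟩ : ∃ m, k = 4 * m + 1 := ⟨k / 4, by omega⟩
      obtain ⟨S, hS, hcard⟩ := lower1 m (by omega)
      have hle := le_indepNum _ S hS
      rw [hcard] at hle
      have e1 : (4 * m + 1 - 1) / 2 = 2 * m := by omega
      have e2 : (4 * m + 1 - 1) / 4 = m := by omega
      rw [e1, e2]
      calc (2 * m) ^ 2 + m = (4 * m + 1) * m := by ring
        _ ≤ _ := hle
    · obtain ⟨m, rfl⟩ : ∃ m, k = 4 * m + 3 := ⟨k / 4, by omega⟩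
      obtain ⟨S, hS, hcard⟩ := lower3 m (by omega)
      have hle := le_indepNum _ S hS
      rw [hcard] at hle
      have e1 : (4 * m + 3 - 1) / 2 = 2 * m + 1 := by omega
      have e2 : (4 * m + 3 - 1) / 4 = m := by omega
      rw [e1, e2]
      calc (2 * m + 1) ^ 2 + m = (2 * m + 2) * m + (2 * m + 1) * (m + 1) := by ring
        _ ≤ _ := hle
  have heq : indepNum (strongProd (SimpleGraph.cycleGraph k) (SimpleGraph.cycleGraph k))
      = ((k - 1) / 2) ^ 2 + (k - 1) / 4 := le_antisymm hupper hlower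
  have hlt : indepNum (SimpleGraph.cycleGraph k) ^ 2
      < indepNum (strongProd (SimpleGraph.cycleGraph k) (SimpleGraph.cycleGraph k)) := by
    rw [heq, hcyc]
    exact Nat.lt_add_of_pos_right (by omega)
  exact ⟨heq, hlt, capacity_gt _ hlt⟩

end Paper
end

section
/- Let H be a finite simple graph with α(H) < Θ(H), let ℓ ≥ 2 be even, and let G be the graph obtained from the disjoint union of H and the path P_ℓ by adding one edge between a fixed vertex of H and an endpoint of P_ℓ. Then Θ(G) = Θ(H + P_ℓ), α(G^k) = α((H+P_ℓ)^k) for every k ∈ ℕ, and Θ(G)^k > α(G^k) for every k ∈ ℕ; i.e., the Shannon capacity of the connected graph G is unattained at every finite strong power. -/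
namespace Paper

/-- The graph obtained from `H` by attaching a path on `l` vertices via an extra
edge between the vertex `v` of `H` and an endpoint (vertex `0`) of the path. -/
def attachPath {V : Type*} (H : SimpleGraph V) (v : V) (l : ℕ) : SimpleGraph (V ⊕ Fin l) :=
  SimpleGraph.fromRel (fun x y =>
    (∃ a b, H.Adj a b ∧ x = Sum.inl a ∧ y = Sum.inl b) ∨
    (∃ i j : Fin l, (SimpleGraph.pathGraph l).Adj i j ∧ x = Sum.inr i ∧ y = Sum.inr j) ∨
    (∃ j : Fin l, (j : ℕ) = 0 ∧ x = Sum.inl v ∧ y = Sum.inr j))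

/-- independent set predicate -/
def IsIS {U : Type*} (F : SimpleGraph U) (s : Finset U) : Prop :=
  ∀ a ∈ s, ∀ b ∈ s, a ≠ b → ¬ F.Adj a b

section API
variable {U U' : Type*} [Fintype U] [Fintype U'] {F : SimpleGraph U} {F' : SimpleGraph U'}

lemma indepNum_def (F : SimpleGraph U) :
    indepNum F = sSup {n | ∃ s : Finset U, IsIS F s ∧ s.card = n} := rfl

lemma indepNum_bddAbove (F : SimpleGraph U) :
    BddAbove {n | ∃ s : Finset U, IsIS F s ∧ s.card = n} := by
  refine ⟨Fintype.card U, ?_⟩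
  rintro n ⟨s, -, rfl⟩
  exact s.card_le_univ

lemma exists_indep (F : SimpleGraph U) : ∃ s : Finset U, IsIS F s ∧ s.card = indepNum F := by
  have h0 : (0:ℕ) ∈ {n | ∃ s : Finset U, IsIS F s ∧ s.card = n} :=
    ⟨∅, by simp [IsIS], by simp⟩
  have := Nat.sSup_mem ⟨0, h0⟩ (indepNum_bddAbove F)
  exact this

lemma card_le_indepNum {s : Finset U} (h : IsIS F s) : s.card ≤ indepNum F :=
  le_csSup (indepNum_bddAbove F) ⟨s, h, rfl⟩

lemma indepNum_le_card (F : SimpleGraph U) : indepNum F ≤ Fintype.card U := by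
  obtain ⟨s, -, hc⟩ := exists_indep F
  rw [← hc]; exact s.card_le_univ

lemma indepNum_le_of_map (φ : U → U') (hinj : Function.Injective φ)
    (hrefl : ∀ x y, F'.Adj (φ x) (φ y) → F.Adj x y) :
    indepNum F ≤ indepNum F' := by
  classical
  obtain ⟨s, hs, hc⟩ := exists_indep F
  rw [← hc]
  have hIS : IsIS F' (s.image φ) := by
    intro a ha b hb hab hadj
    simp only [Finset.mem_image] at ha hb
    obtain ⟨x, hx, rfl⟩ := ha; obtain ⟨y, hy, rfl⟩ := hb
    exact hs x hx y hy (fun h => hab (by rw [h])) (hrefl x y hadj)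
  calc s.card = (s.image φ).card := (Finset.card_image_of_injective s hinj).symm
    _ ≤ indepNum F' := card_le_indepNum hIS

end API

/-- power of a graph indexed by an arbitrary type -/
def powOn {V : Type*} (G : SimpleGraph V) (ι : Type*) : SimpleGraph (ι → V) :=
  SimpleGraph.fromRel (fun x y => ∀ i, x i = y i ∨ G.Adj (x i) (y i))

section pow
variable {V : Type*} {G : SimpleGraph V} {ι κ : Type*}

lemma strongPow_eq_powOn (G : SimpleGraph V) (k : ℕ) : strongPow G k = powOn G (Fin k) := rfl

lemma powOn_adj {x y : ι → V} :
    (powOn G ι).Adj x y ↔ x ≠ y ∧ ∀ i, x i = y i ∨ G.Adj (x i) (y i) := by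
  constructor
  · rintro ⟨hne, h | h⟩
    · exact ⟨hne, h⟩
    · exact ⟨hne, fun i => (h i).imp Eq.symm G.adj_symm⟩
  · rintro ⟨hne, h⟩; exact ⟨hne, Or.inl h⟩

lemma strongPow_adj {k : ℕ} {x y : Fin k → V} :
    (strongPow G k).Adj x y ↔ x ≠ y ∧ ∀ i, x i = y i ∨ G.Adj (x i) (y i) := powOn_adj

lemma not_powOn_adj {x y : ι → V} (hne : x ≠ y) :
    ¬ (powOn G ι).Adj x y ↔ ∃ i, x i ≠ y i ∧ ¬ G.Adj (x i) (y i) := by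
  rw [powOn_adj]
  push_neg
  constructor
  · intro h
    obtain ⟨i, h1, h2⟩ := h hne
    exact ⟨i, h1, h2⟩
  · rintro ⟨i, h1, h2⟩ -
    exact ⟨i, h1, h2⟩

lemma indepNum_powOn_reindex_le [Fintype V] [Fintype ι] [DecidableEq ι] [Fintype κ]
    [DecidableEq κ] (f : ι ≃ κ) :
    indepNum (powOn G ι) ≤ indepNum (powOn G κ) := by
    refine indepNum_le_of_map (fun x => x ∘ f.symm) ?_ ?_
    · intro x y h
      funext i
      have := congrFun h (f i)
      simpa using this
    · intro x y hadj
      rw [powOn_adj] at hadj ⊢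
      obtain ⟨hne, h⟩ := hadj
      refine ⟨fun hc => hne (by rw [hc]), fun i => ?_⟩
      simpa using h (f i)

lemma indepNum_powOn_reindex [Fintype V] [Fintype ι] [DecidableEq ι] [Fintype κ]
    [DecidableEq κ] (e : ι ≃ κ) :
    indepNum (powOn G ι) = indepNum (powOn G κ) :=
  le_antisymm (indepNum_powOn_reindex_le e) (indepNum_powOn_reindex_le e.symm)

end pow

section arith

/-- the counting function: `∑_A α(H^|A|) p^(n-|A|)` in powerset form -/
def TT (a : ℕ → ℕ) (p n : ℕ) : ℕ :=
  ∑ A ∈ (Finset.univ : Finset (Fin n)).powerset, a A.card * p ^ (n - A.card)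

lemma prod_a_le (a : ℕ → ℕ) (ha0 : a 0 = 1) (hsuper : ∀ i j, a i * a j ≤ a (i + j))
    {ι : Type*} (s : Finset ι) (f : ι → ℕ) :
    ∏ i ∈ s, a (f i) ≤ a (∑ i ∈ s, f i) := by
  classical
  induction s using Finset.cons_induction with
  | empty => simp [ha0]
  | cons i s hi ih =>
    rw [Finset.prod_cons, Finset.sum_cons]
    calc a (f i) * ∏ j ∈ s, a (f j) ≤ a (f i) * a (∑ j ∈ s, f j) :=
          Nat.mul_le_mul_left _ ih
      _ ≤ a (f i + ∑ j ∈ s, f j) := hsuper _ _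

lemma TT_pow_lt (a : ℕ → ℕ) (p k m : ℕ) (hp : 1 ≤ p) (hk : 1 ≤ k) (hm : 1 ≤ m)
    (ha0 : a 0 = 1) (hsuper : ∀ i j, a i * a j ≤ a (i + j))
    (hseed : a 1 ^ m < a m) :
    TT a p k ^ m < TT a p (k * m) := by
  classical
  set em : Fin m × Fin k ≃ Fin (k * m) :=
    finProdFinEquiv.trans (finCongr (Nat.mul_comm m k)) with hem
  set θ : (Fin m → Finset (Fin k)) → Finset (Fin (k * m)) :=
    fun t => Finset.univ.biUnion (fun i : Fin m => (t i).image (fun j => em (i, j))) with hθ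
  set piF := Fintype.piFinset (fun _ : Fin m => (Finset.univ : Finset (Fin k)).powerset) with hpiF
  set c : (Fin m → Finset (Fin k)) → ℕ := fun t => ∑ i, (t i).card with hc
  have hmemθ : ∀ t i j, em (i, j) ∈ θ t ↔ j ∈ t i := by
    intro t i j
    simp only [hθ, Finset.mem_biUnion, Finset.mem_image, Finset.mem_univ, true_and]
    constructor
    · rintro ⟨i', j', hj', hE⟩
      have h2 : (i', j') = (i, j) := em.injective hE
      obtain ⟨e1, e2⟩ := Prod.mk.injEq .. ▸ h2
      subst e1; subst e2; exact hj'
    · intro hj; exact ⟨i, j, hj, rfl⟩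
  have hpairinj : ∀ i : Fin m, Function.Injective (fun j : Fin k => em (i, j)) := by
    intro i j j' h
    have := em.injective h
    simpa using this
  have hcardθ : ∀ t, (θ t).card = c t := by
    intro t
    rw [hθ]
    rw [Finset.card_biUnion]
    · exact Finset.sum_congr rfl fun i _ => Finset.card_image_of_injective _ (hpairinj i)
    · intro i _ i' _ hii
      rw [Function.onFun, Finset.disjoint_left]
      rintro x hx hx'
      simp only [Finset.mem_image] at hx hx'
      obtain ⟨j, -, rfl⟩ := hx
      obtain ⟨j', -, hE⟩ := hx'
      have := em.injective hE
      simp only [Prod.mk.injEq] at this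
      exact hii this.1.symm
  have hθinj : Function.Injective θ := by
    intro t t' h
    funext i
    ext j
    rw [← hmemθ t i j, h, hmemθ]
  have hle : ∀ (t : Fin m → Finset (Fin k)) (i : Fin m), (t i).card ≤ k :=
    fun t i => (Finset.card_le_univ _).trans_eq (by simp)
  have hexp : ∀ t : Fin m → Finset (Fin k),
      ∑ i : Fin m, (k - (t i).card) = k * m - c t := by
    intro t
    have h1 : (∑ i : Fin m, (k - (t i).card)) + c t = k * m := by
      rw [hc, ← Finset.sum_add_distrib]
      rw [Finset.sum_congr rfl (fun i _ => Nat.sub_add_cancel (hle t i))]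
      simp [Finset.sum_const, Finset.card_univ, Nat.mul_comm]
    omega
  have e1 : (∑ t ∈ piF, ∏ i : Fin m, (a ((t i).card) * p ^ (k - (t i).card)))
      = TT a p k ^ m := by
    have h := Finset.prod_univ_sum (fun _ : Fin m => (Finset.univ : Finset (Fin k)).powerset)
      (fun _ A => a A.card * p ^ (k - A.card))
    rw [hpiF, ← h]
    simp [TT, Finset.prod_const, Finset.card_univ]
  have e2 : (∑ t ∈ piF, ∏ i : Fin m, (a ((t i).card) * p ^ (k - (t i).card)))
      < ∑ t ∈ piF, a (c t) * p ^ (k * m - c t) := by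
    apply Finset.sum_lt_sum
    · intro t ht
      rw [Finset.prod_mul_distrib, Finset.prod_pow_eq_pow_sum, hexp t]
      exact Nat.mul_le_mul_right _ (prod_a_le a ha0 hsuper _ _)
    · refine ⟨fun _ => {(⟨0, hk⟩ : Fin k)}, ?_, ?_⟩
      · rw [hpiF, Fintype.mem_piFinset]
        intro i
        exact Finset.mem_powerset.mpr (Finset.subset_univ _)
      · have hcstar : c (fun _ => {(⟨0, hk⟩ : Fin k)}) = m := by
          simp [hc]
        rw [Finset.prod_mul_distrib, Finset.prod_pow_eq_pow_sum, hexp, hcstar]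
        simp only [Finset.card_singleton, Finset.prod_const, Finset.card_univ,
          Fintype.card_fin]
        exact (Nat.mul_lt_mul_right (Nat.pow_pos hp)).mpr hseed
  have e3 : (∑ t ∈ piF, a (c t) * p ^ (k * m - c t)) ≤ TT a p (k * m) := by
    have hcong : ∀ t ∈ piF, a (c t) * p ^ (k * m - c t)
        = a ((θ t).card) * p ^ (k * m - (θ t).card) := by
      intro t _; rw [hcardθ]
    rw [Finset.sum_congr rfl hcong,
      ← Finset.sum_image (f := fun A : Finset (Fin (k*m)) => a A.card * p ^ (k * m - A.card))
        (g := θ) (fun t _ t' _ h => hθinj h)]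
    apply Finset.sum_le_sum_of_subset
    intro A hA
    exact Finset.mem_powerset.mpr (Finset.subset_univ _)
  calc TT a p k ^ m = _ := e1.symm
    _ < _ := e2
    _ ≤ _ := e3

end arith
section powfacts
variable {V : Type*} [Fintype V] (H : SimpleGraph V)

lemma indepNum_strongPow_zero : indepNum (strongPow H 0) = 1 := by
  apply le_antisymm
  · have h := indepNum_le_card (strongPow H 0)
    simpa using h
  · have hIS : IsIS (strongPow H 0) {fun i => i.elim0} := by
      intro a ha b hb hab
      exact absurd (funext fun i => i.elim0) hab
    have h := card_le_indepNum hIS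
    simpa using h

lemma indepNum_strongPow_one : indepNum (strongPow H 1) = indepNum H := by
  apply le_antisymm
  · refine indepNum_le_of_map (fun x => x 0) ?_ ?_
    · intro x y h
      funext i
      have h0 : i = 0 := Subsingleton.elim _ _
      rw [h0]
      exact h
    · intro x y hadj
      rw [strongPow_adj]
      refine ⟨fun h => hadj.ne (by rw [h]), fun i => ?_⟩
      have h0 : i = 0 := Subsingleton.elim _ _
      rw [h0]
      exact Or.inr hadj
  · refine indepNum_le_of_map (fun v _ => v) ?_ ?_
    · intro x y h
      exact congrFun h 0
    · intro x y hadj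
      rw [strongPow_adj] at hadj
      obtain ⟨hne, h⟩ := hadj
      rcases h 0 with h | h
      · exact absurd (funext fun _ => h) hne
      · exact h

lemma indepNum_strongPow_supermul (i j : ℕ) :
    indepNum (strongPow H i) * indepNum (strongPow H j)
      ≤ indepNum (strongPow H (i + j)) := by
  classical
  obtain ⟨s, hs, hcs⟩ := exists_indep (strongPow H i)
  obtain ⟨t, ht, hct⟩ := exists_indep (strongPow H j)
  have hψinj : Function.Injective (fun xy : (Fin i → V) × (Fin j → V) =>
      Fin.append xy.1 xy.2) := by
    rintro ⟨x, y⟩ ⟨x', y'⟩ h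
    simp only [Prod.mk.injEq]
    constructor
    · funext i0
      have := congrFun h (Fin.castAdd j i0)
      simpa [Fin.append_left] using this
    · funext i0
      have := congrFun h (Fin.natAdd i i0)
      simpa [Fin.append_right] using this
  have hIS : IsIS (strongPow H (i + j))
      ((s ×ˢ t).image (fun xy => Fin.append xy.1 xy.2)) := by
    intro u hu w hw huw
    simp only [Finset.mem_image, Finset.mem_product] at hu hw
    obtain ⟨⟨x, y⟩, ⟨hx, hy⟩, rfl⟩ := hu
    obtain ⟨⟨x', y'⟩, ⟨hx', hy'⟩, rfl⟩ := hw
    rw [strongPow_adj]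
    rintro ⟨-, hall⟩
    by_cases hxx : x = x'
    · have hyy : y ≠ y' := by
        rintro rfl
        exact huw (by rw [hxx])
      have hnadj := ht y hy y' hy' hyy
      rw [strongPow_eq_powOn, not_powOn_adj hyy] at hnadj
      obtain ⟨i0, hne0, hnadj0⟩ := hnadj
      rcases hall (Fin.natAdd i i0) with h | h
      · rw [Fin.append_right, Fin.append_right] at h
        exact hne0 h
      · rw [Fin.append_right, Fin.append_right] at h
        exact hnadj0 h
    · have hnadj := hs x hx x' hx' hxx
      rw [strongPow_eq_powOn, not_powOn_adj hxx] at hnadj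
      obtain ⟨i0, hne0, hnadj0⟩ := hnadj
      rcases hall (Fin.castAdd j i0) with h | h
      · rw [Fin.append_left, Fin.append_left] at h
        exact hne0 h
      · rw [Fin.append_left, Fin.append_left] at h
        exact hnadj0 h
  have h := card_le_indepNum hIS
  rw [Finset.card_image_of_injective _ hψinj, Finset.card_product, hcs, hct] at h
  exact h

lemma indepNum_strongPow_mono {U : Type*} [Fintype U] {F F' : SimpleGraph U}
    (h : F ≤ F') (n : ℕ) :
    indepNum (strongPow F' n) ≤ indepNum (strongPow F n) := by
  refine indepNum_le_of_map id Function.injective_id ?_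
  intro x y hadj
  rw [strongPow_adj] at hadj ⊢
  exact ⟨hadj.1, fun i => (hadj.2 i).imp id (fun hh => h hh)⟩

end powfacts
section lower
variable {V U : Type*} [Fintype V] [Fintype U] (H : SimpleGraph V) (F : SimpleGraph U)

lemma TT_le_indepNum (e : V → U) (he : Function.Injective e) (Q : Finset U) (p : ℕ)
    (hQcard : Q.card = p) (hQne : Q.Nonempty)
    (h1 : ∀ a b, F.Adj (e a) (e b) → H.Adj a b)
    (h2 : ∀ q ∈ Q, ∀ q' ∈ Q, ¬ F.Adj q q')
    (h3 : ∀ a, ∀ q ∈ Q, e a ≠ q)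
    (h4 : ∀ a, ∀ q ∈ Q, ¬ F.Adj (e a) q)
    (n : ℕ) :
    TT (fun j => indepNum (strongPow H j)) p n ≤ indepNum (strongPow F n) := by
  classical
  obtain ⟨q₀, hq₀⟩ := hQne
  have hSA : ∀ A : Finset (Fin n), ∃ S : Finset ({i // i ∈ A} → V),
      IsIS (powOn H {i // i ∈ A}) S ∧ S.card = indepNum (strongPow H A.card) := by
    intro A
    obtain ⟨S, hS, hc⟩ := exists_indep (powOn H {i // i ∈ A})
    refine ⟨S, hS, ?_⟩
    rw [hc, strongPow_eq_powOn]
    exact indepNum_powOn_reindex (G := H) A.equivFin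
  choose S hSis hScard using hSA
  set D : Finset (Fin n) → Finset (Fin n → U) :=
    fun A => Fintype.piFinset (fun i => if i ∈ A then {q₀} else Q) with hD
  set Φ : (A : Finset (Fin n)) → (({i // i ∈ A} → V) × (Fin n → U)) → (Fin n → U) :=
    fun A sq i => if h : i ∈ A then e (sq.1 ⟨i, h⟩) else sq.2 i with hΦ
  set X : Finset (Fin n) → Finset (Fin n → U) := fun A => (S A ×ˢ D A).image (Φ A) with hX
  have hmem : ∀ A x, x ∈ X A → ∃ sq ∈ S A ×ˢ D A, Φ A sq = x := by
    intro A x hx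
    rw [hX] at hx
    simpa using hx
  have hval : ∀ A sq, sq ∈ S A ×ˢ D A →
      (∀ i (h : i ∈ A), Φ A sq i = e (sq.1 ⟨i, h⟩)) ∧
      (∀ i ∉ A, Φ A sq i ∈ Q) ∧ (∀ i ∈ A, sq.2 i = q₀) := by
    intro A sq hsq
    rw [Finset.mem_product] at hsq
    have hd := hsq.2
    rw [hD, Fintype.mem_piFinset] at hd
    refine ⟨fun i h => by simp [hΦ, h], fun i h => ?_, fun i h => ?_⟩
    · have hdi := hd i
      rw [if_neg h] at hdi
      simpa [hΦ, h] using hdi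
    · have hdi := hd i
      rw [if_pos h] at hdi
      simpa using hdi
  have hinj : ∀ A : Finset (Fin n), Set.InjOn (Φ A) ↑(S A ×ˢ D A) := by
    intro A sq hsq sq' hsq' heq
    rw [Finset.mem_coe] at hsq hsq'
    have hv := hval A sq hsq
    have hv' := hval A sq' hsq'
    have hfst : sq.1 = sq'.1 := by
      funext i0
      have h0 := congrFun heq i0.1
      rw [hv.1 i0.1 i0.2, hv'.1 i0.1 i0.2] at h0
      have := he h0
      simpa using this
    have hsnd : sq.2 = sq'.2 := by
      funext i
      by_cases h : i ∈ A
      · rw [hv.2.2 i h, hv'.2.2 i h]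
      · have h0 := congrFun heq i
        rw [hΦ] at h0
        simpa [dif_neg h] using h0
    exact Prod.ext hfst hsnd
  have hpattern : ∀ A x, x ∈ X A → ∀ i, i ∈ A ↔ ∃ a, x i = e a := by
    intro A x hx i
    obtain ⟨sq, hsq, rfl⟩ := hmem A x hx
    constructor
    · intro h
      exact ⟨sq.1 ⟨i, h⟩, (hval A sq hsq).1 i h⟩
    · rintro ⟨a, ha⟩
      by_contra h
      have hq := (hval A sq hsq).2.1 i h
      exact h3 a _ hq ha.symm
  have hdisj : ∀ A ∈ (Finset.univ : Finset (Fin n)).powerset,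
      ∀ B ∈ (Finset.univ : Finset (Fin n)).powerset, A ≠ B → Disjoint (X A) (X B) := by
    intro A _ B _ hAB
    rw [Finset.disjoint_left]
    intro x hxA hxB
    apply hAB
    ext i
    rw [hpattern A x hxA i, hpattern B x hxB i]
  have hcard : ∀ A : Finset (Fin n),
      (X A).card = indepNum (strongPow H A.card) * p ^ (n - A.card) := by
    intro A
    rw [hX]
    rw [Finset.card_image_of_injOn (hinj A), Finset.card_product, hScard]
    congr 1
    rw [hD, Fintype.card_piFinset]
    have hstep : ∀ i : Fin n, ((if i ∈ A then ({q₀} : Finset U) else Q)).card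
        = if i ∈ A then 1 else p := by
      intro i
      split <;> simp [hQcard]
    rw [Finset.prod_congr rfl (fun i _ => hstep i)]
    rw [← Finset.prod_mul_prod_compl A]
    rw [Finset.prod_congr rfl (fun i hi => if_pos hi),
      Finset.prod_congr rfl (fun i (hi : i ∈ Aᶜ) => if_neg (Finset.mem_compl.mp hi))]
    simp [Finset.prod_const, Finset.card_compl]
  have hIS : IsIS (strongPow F n) ((Finset.univ : Finset (Fin n)).powerset.biUnion X) := by
    intro x hx y hy hxy
    rw [Finset.mem_biUnion] at hx hy
    obtain ⟨A, -, hxA⟩ := hx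
    obtain ⟨B, -, hyB⟩ := hy
    rw [strongPow_adj]
    rintro ⟨-, hall⟩
    by_cases hAB : A = B
    · subst hAB
      obtain ⟨sq, hsq, rfl⟩ := hmem A x hxA
      obtain ⟨sq', hsq', rfl⟩ := hmem A y hyB
      by_cases hfst : sq.1 = sq'.1
      · have hne2 : ∃ i, i ∉ A ∧ Φ A sq i ≠ Φ A sq' i := by
          by_contra hcon
          push_neg at hcon
          apply hxy
          funext i
          by_cases hiA : i ∈ A
          · rw [(hval A sq hsq).1 i hiA, (hval A sq' hsq').1 i hiA, hfst]
          · exact hcon i hiA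
        obtain ⟨i, hiA, hne⟩ := hne2
        have q1 := (hval A sq hsq).2.1 i hiA
        have q2 := (hval A sq' hsq').2.1 i hiA
        rcases hall i with h | h
        · exact hne h
        · exact h2 _ q1 _ q2 h
      · rw [Finset.mem_product] at hsq hsq'
        have hnadj := hSis A sq.1 hsq.1 sq'.1 hsq'.1 hfst
        rw [not_powOn_adj hfst] at hnadj
        obtain ⟨i0, hne0, hnadj0⟩ := hnadj
        have e1 : Φ A sq i0.1 = e (sq.1 i0) :=
          (hval A sq (Finset.mem_product.mpr hsq)).1 i0.1 i0.2
        have e2 : Φ A sq' i0.1 = e (sq'.1 i0) :=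
          (hval A sq' (Finset.mem_product.mpr hsq')).1 i0.1 i0.2
        rcases hall i0.1 with h | h
        · rw [e1, e2] at h
          exact hne0 (he h)
        · rw [e1, e2] at h
          exact hnadj0 (h1 _ _ h)
    · have hsym : ∃ i, (i ∈ A ∧ i ∉ B) ∨ (i ∈ B ∧ i ∉ A) := by
        by_contra hcon
        push_neg at hcon
        apply hAB
        ext i
        have h' := hcon i
        tauto
      obtain ⟨i, hi⟩ := hsym
      rcases hi with ⟨hiA, hiB⟩ | ⟨hiB, hiA⟩
      · obtain ⟨a, hxa⟩ := (hpattern A x hxA i).mp hiA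
        have hyQ : y i ∈ Q := by
          obtain ⟨sq, hsq, rfl⟩ := hmem B y hyB
          exact (hval B sq hsq).2.1 i hiB
        rcases hall i with h | h
        · rw [hxa] at h
          exact h3 a _ hyQ h
        · rw [hxa] at h
          exact h4 a _ hyQ h
      · obtain ⟨a, hya⟩ := (hpattern B y hyB i).mp hiB
        have hxQ : x i ∈ Q := by
          obtain ⟨sq, hsq, rfl⟩ := hmem A x hxA
          exact (hval A sq hsq).2.1 i hiA
        rcases hall i with h | h
        · rw [hya] at h
          exact h3 a _ hxQ h.symm
        · rw [hya] at h
          exact h4 a _ hxQ h.symm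
  have hfinal := card_le_indepNum hIS
  rw [Finset.card_biUnion hdisj] at hfinal
  rw [TT]
  calc (∑ A ∈ (Finset.univ : Finset (Fin n)).powerset,
        indepNum (strongPow H A.card) * p ^ (n - A.card))
      = ∑ A ∈ (Finset.univ : Finset (Fin n)).powerset, (X A).card :=
        Finset.sum_congr rfl fun A _ => (hcard A).symm
    _ ≤ indepNum (strongPow F n) := hfinal

end lower
lemma prod_ite_card {n : ℕ} (A : Finset (Fin n)) (p : ℕ) :
    (∏ i : Fin n, (if i ∈ A then 1 else p)) = p ^ (n - A.card) := by
  rw [← Finset.prod_mul_prod_compl A, Finset.prod_congr rfl (fun i hi => if_pos hi),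
    Finset.prod_congr rfl (fun i (hi : i ∈ Aᶜ) => if_neg (Finset.mem_compl.mp hi))]
  simp [Finset.prod_const, Finset.card_compl]

section upper
variable {V U : Type*} [Fintype V] [Fintype U] (H : SimpleGraph V) (F : SimpleGraph U)

lemma indepNum_le_TT [Inhabited V] (p : ℕ) (K : U → V ⊕ Fin p)
    (c1 : ∀ u u' c, K u = Sum.inr c → K u' = Sum.inr c → u = u' ∨ F.Adj u u')
    (c2 : ∀ u u' a, K u = Sum.inl a → K u' = Sum.inl a → u = u')
    (c3 : ∀ u u' a a', K u = Sum.inl a → K u' = Sum.inl a' → H.Adj a a' → F.Adj u u')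
    (n : ℕ) :
    indepNum (strongPow F n) ≤ TT (fun j => indepNum (strongPow H j)) p n := by
  classical
  obtain ⟨Smax, hS, hc⟩ := exists_indep (strongPow F n)
  rw [← hc]
  set f : (Fin n → U) → (Fin n → Option (Fin p)) :=
    fun x i => Sum.elim (fun _ => none) some (K (x i)) with hf
  rw [Finset.card_eq_sum_card_fiberwise (f := f) (t := Finset.univ)
    (fun x _ => Finset.mem_univ _)]
  set g : (Fin n → Option (Fin p)) → Finset (Fin n) :=
    fun t => Finset.univ.filter (fun i => t i = none) with hg
  have fiberbound : ∀ t : Fin n → Option (Fin p),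
      (Smax.filter (fun x => f x = t)).card ≤ indepNum (strongPow H (g t).card) := by
    intro t
    set A := g t with hA
    have hAmem : ∀ i : Fin n, i ∈ A ↔ t i = none := by
      intro i
      simp [hA, hg]
    set ρ : (Fin n → U) → ({i // i ∈ A} → V) :=
      fun x j => ((K (x j.1)).getLeft?).getD default with hρ
    have hKA : ∀ x ∈ Smax.filter (fun x => f x = t), ∀ j : Fin n, j ∈ A →
        K (x j) = Sum.inl (((K (x j)).getLeft?).getD default) := by
      intro x hx j hj
      rw [Finset.mem_filter] at hx
      have hfx : f x j = t j := congrFun hx.2 j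
      have htj : t j = none := (hAmem j).mp hj
      rw [htj] at hfx
      rcases hKxj : K (x j) with a | c
      · simp
      · rw [hf] at hfx
        simp only [hKxj, Sum.elim_inr] at hfx
        exact absurd hfx (Option.some_ne_none c)
    have hKB : ∀ x ∈ Smax.filter (fun x => f x = t), ∀ j : Fin n, j ∉ A →
        ∃ c, K (x j) = Sum.inr c ∧ t j = some c := by
      intro x hx j hj
      rw [Finset.mem_filter] at hx
      have hfx : f x j = t j := congrFun hx.2 j
      have htj : t j ≠ none := fun h => hj ((hAmem j).mpr h)
      rcases hKxj : K (x j) with a | c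
      · rw [hf] at hfx
        simp only [hKxj, Sum.elim_inl] at hfx
        exact absurd hfx.symm htj
      · rw [hf] at hfx
        simp only [hKxj, Sum.elim_inr] at hfx
        exact ⟨c, rfl, hfx.symm⟩
    have hadjall : ∀ x ∈ Smax.filter (fun x => f x = t), ∀ y ∈ Smax.filter (fun x => f x = t),
        (∀ j : {i // i ∈ A}, ρ x j = ρ y j ∨ H.Adj (ρ x j) (ρ y j)) →
        ∀ i, x i = y i ∨ F.Adj (x i) (y i) := by
      intro x hx y hy hall i
      by_cases hi : i ∈ A
      · have kx := hKA x hx i hi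
        have ky := hKA y hy i hi
        have kx' : K (x i) = Sum.inl (ρ x ⟨i, hi⟩) := kx
        have ky' : K (y i) = Sum.inl (ρ y ⟨i, hi⟩) := ky
        rcases hall ⟨i, hi⟩ with h | h
        · left
          exact c2 _ _ _ kx' (ky'.trans (by rw [h]))
        · right
          exact c3 _ _ _ _ kx' ky' h
      · obtain ⟨c, kx, htc⟩ := hKB x hx i hi
        obtain ⟨c', ky, htc'⟩ := hKB y hy i hi
        have hcc : c = c' := by
          rw [htc] at htc'
          exact Option.some_injective _ htc'
        exact c1 _ _ c kx (by rw [ky, hcc])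
    have hinj : Set.InjOn ρ ↑(Smax.filter (fun x => f x = t)) := by
      intro x hx y hy hxy
      rw [Finset.mem_coe] at hx hy
      by_contra hne
      have hall : ∀ j : {i // i ∈ A}, ρ x j = ρ y j ∨ H.Adj (ρ x j) (ρ y j) :=
        fun j => Or.inl (by rw [hxy])
      have := hadjall x hx y hy hall
      have hxS := (Finset.mem_filter.mp hx).1
      have hyS := (Finset.mem_filter.mp hy).1
      exact hS x hxS y hyS hne (strongPow_adj.mpr ⟨hne, this⟩)
    have hISim : IsIS (powOn H {i // i ∈ A}) ((Smax.filter (fun x => f x = t)).image ρ) := by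
      intro rx hrx ry hry hrne hadj
      simp only [Finset.mem_image] at hrx hry
      obtain ⟨x, hx, rfl⟩ := hrx
      obtain ⟨y, hy, rfl⟩ := hry
      rw [powOn_adj] at hadj
      have hxy : x ≠ y := fun h => hrne (by rw [h])
      have := hadjall x hx y hy hadj.2
      have hxS := (Finset.mem_filter.mp hx).1
      have hyS := (Finset.mem_filter.mp hy).1
      exact hS x hxS y hyS hxy (strongPow_adj.mpr ⟨hxy, this⟩)
    calc (Smax.filter (fun x => f x = t)).card
        = ((Smax.filter (fun x => f x = t)).image ρ).card :=
          (Finset.card_image_of_injOn hinj).symm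
      _ ≤ indepNum (powOn H {i // i ∈ A}) := card_le_indepNum hISim
      _ = indepNum (strongPow H A.card) := by
          rw [strongPow_eq_powOn]
          exact indepNum_powOn_reindex (G := H) A.equivFin
  calc (∑ t : Fin n → Option (Fin p), (Smax.filter (fun x => f x = t)).card)
      ≤ ∑ t : Fin n → Option (Fin p), indepNum (strongPow H (g t).card) :=
        Finset.sum_le_sum (fun t _ => fiberbound t)
    _ ≤ TT (fun j => indepNum (strongPow H j)) p n := by
        rw [Finset.sum_comp (fun A : Finset (Fin n) => indepNum (strongPow H A.card)) g]
        rw [TT]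
        have himg : Finset.univ.image g ⊆ (Finset.univ : Finset (Fin n)).powerset :=
          fun A hA => Finset.mem_powerset.mpr (Finset.subset_univ A)
        have hcount : ∀ A : Finset (Fin n),
            (Finset.univ.filter (fun t : Fin n → Option (Fin p) => g t = A)).card
              = p ^ (n - A.card) := by
          intro A
          have hset : Finset.univ.filter (fun t : Fin n → Option (Fin p) => g t = A)
              = Fintype.piFinset (fun i => if i ∈ A then ({none} : Finset (Option (Fin p)))
                  else Finset.univ.image some) := by
            ext t
            simp only [Finset.mem_filter, Finset.mem_univ, true_and, Fintype.mem_piFinset]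
            constructor
            · intro h i
              have hmemi : i ∈ A ↔ t i = none := by rw [← h]; simp [hg]
              by_cases hi : i ∈ A
              · rw [if_pos hi]
                simpa using hmemi.mp hi
              · rw [if_neg hi]
                rcases ht : t i with _ | c
                · exact absurd (hmemi.mpr ht) hi
                · simp
            · intro h
              ext i
              simp only [hg, Finset.mem_filter, Finset.mem_univ, true_and]
              have hi := h i
              by_cases hiA : i ∈ A
              · rw [if_pos hiA] at hi
                simp only [Finset.mem_singleton] at hi
                simp [hi, hiA]
              · rw [if_neg hiA] at hi
                simp only [Finset.mem_image, Finset.mem_univ, true_and] at hi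
                obtain ⟨c, hc⟩ := hi
                constructor
                · intro hnone
                  rw [hnone] at hc
                  exact absurd hc (Option.some_ne_none c)
                · intro hA'
                  exact absurd hA' hiA
          rw [hset, Fintype.card_piFinset]
          have hstep : ∀ i : Fin n,
              ((if i ∈ A then ({none} : Finset (Option (Fin p)))
                else Finset.univ.image some)).card = if i ∈ A then 1 else p := by
            intro i
            split
            · simp
            · rw [Finset.card_image_of_injective _ (Option.some_injective _)]
              simp
          rw [Finset.prod_congr rfl (fun i _ => hstep i)]
          exact prod_ite_card A p
        calc (∑ A ∈ Finset.univ.image g,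
              (Finset.univ.filter (fun t => g t = A)).card
                • indepNum (strongPow H A.card))
            ≤ ∑ A ∈ (Finset.univ : Finset (Fin n)).powerset,
              (Finset.univ.filter (fun t => g t = A)).card
                • indepNum (strongPow H A.card) :=
              Finset.sum_le_sum_of_subset himg
          _ = ∑ A ∈ (Finset.univ : Finset (Fin n)).powerset,
              indepNum (strongPow H A.card) * p ^ (n - A.card) := by
              refine Finset.sum_congr rfl fun A _ => ?_
              rw [hcount A, smul_eq_mul, Nat.mul_comm]

end upper
section graphs
variable {V : Type*} (H : SimpleGraph V) (v : V) (l : ℕ)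

lemma sum_adj_inl_inl {a b : V} :
    (H ⊕g SimpleGraph.pathGraph l).Adj (Sum.inl a) (Sum.inl b) ↔ H.Adj a b := Iff.rfl

lemma sum_adj_inr_inr {i j : Fin l} :
    (H ⊕g SimpleGraph.pathGraph l).Adj (Sum.inr i) (Sum.inr j)
      ↔ (SimpleGraph.pathGraph l).Adj i j := Iff.rfl

lemma sum_not_adj_inl_inr {a : V} {j : Fin l} :
    ¬ (H ⊕g SimpleGraph.pathGraph l).Adj (Sum.inl a) (Sum.inr j) := by
  intro h
  simp only [SimpleGraph.sum_adj] at h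

lemma sum_le_attachPath : H ⊕g SimpleGraph.pathGraph l ≤ attachPath H v l := by
  intro x y hxy
  rw [attachPath, SimpleGraph.fromRel_adj]
  cases x with
  | inl a =>
    cases y with
    | inl b =>
      have hab : H.Adj a b := hxy
      exact ⟨by simp [hab.ne], Or.inl (Or.inl ⟨a, b, hab, rfl, rfl⟩)⟩
    | inr j => exact absurd hxy (sum_not_adj_inl_inr H l)
  | inr i =>
    cases y with
    | inl b =>
      exact absurd hxy.symm (sum_not_adj_inl_inr H l)
    | inr j =>
      have hij : (SimpleGraph.pathGraph l).Adj i j := hxy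
      exact ⟨by simp [hij.ne], Or.inl (Or.inr (Or.inl ⟨i, j, hij, rfl, rfl⟩))⟩

lemma attachPath_adj_cases {x y : V ⊕ Fin l}
    (h : (attachPath H v l).Adj x y) :
    (∃ a b, H.Adj a b ∧ x = Sum.inl a ∧ y = Sum.inl b) ∨
    (∃ i j : Fin l, (SimpleGraph.pathGraph l).Adj i j ∧ x = Sum.inr i ∧ y = Sum.inr j) ∨
    (∃ j : Fin l, (j : ℕ) = 0 ∧
      ((x = Sum.inl v ∧ y = Sum.inr j) ∨ (y = Sum.inl v ∧ x = Sum.inr j))) := by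
  rw [attachPath, SimpleGraph.fromRel_adj] at h
  obtain ⟨-, h | h⟩ := h
  · rcases h with ⟨a, b, hab, hx, hy⟩ | ⟨i, j, hij, hx, hy⟩ | ⟨j, hj, hx, hy⟩
    · exact Or.inl ⟨a, b, hab, hx, hy⟩
    · exact Or.inr (Or.inl ⟨i, j, hij, hx, hy⟩)
    · exact Or.inr (Or.inr ⟨j, hj, Or.inl ⟨hx, hy⟩⟩)
  · rcases h with ⟨a, b, hab, hx, hy⟩ | ⟨i, j, hij, hx, hy⟩ | ⟨j, hj, hx, hy⟩
    · exact Or.inl ⟨b, a, hab.symm, hy, hx⟩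
    · exact Or.inr (Or.inl ⟨j, i, hij.symm, hy, hx⟩)
    · exact Or.inr (Or.inr ⟨j, hj, Or.inr ⟨hx, hy⟩⟩)

lemma attachPath_adj_inl_inl {a b : V}
    (h : (attachPath H v l).Adj (Sum.inl a) (Sum.inl b)) : H.Adj a b := by
  rcases attachPath_adj_cases H v l h with ⟨a', b', hab, hx, hy⟩ | ⟨i, j, -, hx, -⟩ |
      ⟨j, -, ⟨-, hy⟩ | ⟨-, hx⟩⟩
  · rw [Sum.inl.injEq] at hx hy
    rwa [hx, hy]
  · exact absurd hx (by simp)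
  · exact absurd hy (by simp)
  · exact absurd hx (by simp)

lemma attachPath_not_adj_inr_odd {i j : Fin l} (hi : (i : ℕ) % 2 = 1)
    (hj : (j : ℕ) % 2 = 1) : ¬ (attachPath H v l).Adj (Sum.inr i) (Sum.inr j) := by
  intro h
  rcases attachPath_adj_cases H v l h with ⟨a, b, -, hx, -⟩ | ⟨i', j', hadj, hx, hy⟩ |
      ⟨j', -, ⟨hx, -⟩ | ⟨hy, -⟩⟩
  · exact absurd hx (by simp)
  · rw [Sum.inr.injEq] at hx hy
    rw [SimpleGraph.pathGraph_adj] at hadj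
    subst hx; subst hy
    omega
  · exact absurd hx (by simp)
  · exact absurd hy (by simp)

lemma attachPath_not_adj_inl_inr_odd {a : V} {j : Fin l} (hj : (j : ℕ) % 2 = 1) :
    ¬ (attachPath H v l).Adj (Sum.inl a) (Sum.inr j) := by
  intro h
  rcases attachPath_adj_cases H v l h with ⟨a', b', -, -, hy⟩ | ⟨i', j', -, hx, -⟩ |
      ⟨j', hj', ⟨-, hy⟩ | ⟨hy, -⟩⟩
  · exact absurd hy (by simp)
  · exact absurd hx (by simp)
  · rw [Sum.inr.injEq] at hy
    subst hy
    omega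
  · exact absurd hy (by simp)

lemma card_odds {p : ℕ} (hlp : l = 2 * p) :
    ((Finset.univ : Finset (Fin l)).filter (fun i : Fin l => i.val % 2 = 1)).card = p := by
  subst hlp
  have hcb := Finset.card_bij' (s := (Finset.univ : Finset (Fin (2*p))).filter (fun i : Fin (2*p) => i.val % 2 = 1)) (t := (Finset.univ : Finset (Fin p))) (i := fun (x : Fin (2 * p)) _ => (⟨(x : ℕ) / 2, by have := x.isLt; omega⟩ : Fin p))
    (j := fun (y : Fin p) _ => (⟨2 * (y : ℕ) + 1, by have := y.isLt; omega⟩ : Fin (2 * p))) ?_ ?_ ?_ ?_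
  · simpa using hcb
  · intro x hx
    exact Finset.mem_univ _
  · intro y hy
    simp only [Finset.mem_filter, Finset.mem_univ, true_and]
    omega
  · intro x hx
    simp only [Finset.mem_filter, Finset.mem_univ, true_and] at hx
    have := x.isLt
    ext
    simp only []
    omega
  · intro y hy
    have := y.isLt
    ext
    simp only []
    omega

end graphs
section capacity
variable {U : Type*} [Fintype U]

lemma capacity_bddAbove (F : SimpleGraph U) :
    BddAbove (Set.range fun k : ℕ =>
      (indepNum (strongPow F (k+1)) : ℝ) ^ ((1:ℝ)/(k+1))) := by
  refine ⟨(Fintype.card U : ℝ), ?_⟩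
  rintro x ⟨k, rfl⟩
  have hα : indepNum (strongPow F (k+1)) ≤ Fintype.card U ^ (k+1) := by
    calc indepNum (strongPow F (k+1)) ≤ Fintype.card (Fin (k+1) → U) :=
          indepNum_le_card (strongPow F (k+1))
      _ = Fintype.card U ^ (k+1) := by simp
  have hcast : ((indepNum (strongPow F (k+1)) : ℝ)) ≤ ((Fintype.card U : ℝ)) ^ (k+1) := by
    exact_mod_cast hα
  have hexp : ((1:ℝ)/((k:ℝ)+1)) = (((k+1 : ℕ) : ℝ))⁻¹ := by push_cast; rw [one_div]
  calc (indepNum (strongPow F (k+1)) : ℝ) ^ ((1:ℝ)/((k:ℝ)+1))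
      ≤ ((Fintype.card U : ℝ) ^ (k+1)) ^ ((1:ℝ)/((k:ℝ)+1)) :=
        Real.rpow_le_rpow (by positivity) hcast (by positivity)
    _ = (Fintype.card U : ℝ) := by
        rw [hexp]
        exact Real.pow_rpow_inv_natCast (by positivity) (Nat.succ_ne_zero k)

lemma term_le_capacity (F : SimpleGraph U) (N : ℕ) (hN : 1 ≤ N) :
    (indepNum (strongPow F N) : ℝ) ^ ((1:ℝ)/(N:ℝ)) ≤ shannonCapacity F := by
  obtain ⟨j, rfl⟩ : ∃ j, N = j + 1 := ⟨N - 1, by omega⟩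
  have h := le_ciSup (capacity_bddAbove F) j
  unfold shannonCapacity
  have hc : ((j+1 : ℕ) : ℝ) = (j : ℝ) + 1 := by push_cast; ring
  rw [hc]
  exact h

lemma nonempty_of_capacity {V : Type*} [Fintype V] (H : SimpleGraph V)
    (hH : (indepNum H : ℝ) < shannonCapacity H) : Nonempty V := by
  by_contra hemp
  rw [not_nonempty_iff] at hemp
  have hterm : ∀ k : ℕ, (indepNum (strongPow H (k+1)) : ℝ) ^ ((1:ℝ)/((k:ℝ)+1)) = 0 := by
    intro k
    have hcard : Fintype.card (Fin (k+1) → V) = 0 := by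
      simp [Fintype.card_eq_zero_iff]
    have h0 : indepNum (strongPow H (k+1)) = 0 :=
      Nat.le_zero.mp (hcard ▸ indepNum_le_card (strongPow H (k+1)))
    rw [h0]
    push_cast
    exact Real.zero_rpow (by positivity)
  have hcap : shannonCapacity H = 0 := by
    unfold shannonCapacity
    rw [iSup_congr hterm]
    exact ciSup_const
  rw [hcap] at hH
  exact absurd hH (not_lt.mpr (Nat.cast_nonneg _))

end capacity

theorem connected_unattainable {V : Type*} [Fintype V] (H : SimpleGraph V) (v : V)
    (l : ℕ) (hl2 : 2 ≤ l) (hleven : Even l)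
    (hH : (indepNum H : ℝ) < shannonCapacity H) :
    shannonCapacity (attachPath H v l) = shannonCapacity (H ⊕g SimpleGraph.pathGraph l) ∧
    (∀ k : ℕ, indepNum (strongPow (attachPath H v l) k)
        = indepNum (strongPow (H ⊕g SimpleGraph.pathGraph l) k)) ∧
    (∀ k : ℕ, 1 ≤ k →
      (indepNum (strongPow (attachPath H v l) k) : ℝ)
        < shannonCapacity (attachPath H v l) ^ k) := by
  classical
  obtain ⟨r, hr⟩ := hleven
  set p := r with hpdef
  have hlp : l = 2 * p := by omega
  have hp1 : 1 ≤ p := by omega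
  have hneV : Nonempty V := nonempty_of_capacity H hH
  have hinhV : Inhabited V := Classical.inhabited_of_nonempty hneV
  set a : ℕ → ℕ := fun j => indepNum (strongPow H j) with ha
  set Q : Finset (V ⊕ Fin l) :=
    ((Finset.univ : Finset (Fin l)).filter (fun i : Fin l => i.val % 2 = 1)).image Sum.inr
    with hQ
  have hQcard : Q.card = p := by
    rw [hQ, Finset.card_image_of_injective _ Sum.inr_injective]
    exact card_odds l hlp
  have hQne : Q.Nonempty := by
    exact ⟨Sum.inr ⟨1, by omega⟩,
      Finset.mem_image_of_mem _ (Finset.mem_filter.mpr ⟨Finset.mem_univ _, rfl⟩)⟩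
  have hQodd : ∀ q ∈ Q, ∃ i : Fin l, i.val % 2 = 1 ∧ q = Sum.inr i := by
    intro q hq
    rw [hQ, Finset.mem_image] at hq
    obtain ⟨i, hi, rfl⟩ := hq
    rw [Finset.mem_filter] at hi
    exact ⟨i, hi.2, rfl⟩
  have hlow : ∀ n, TT a p n ≤ indepNum (strongPow (attachPath H v l) n) := by
    intro n
    refine TT_le_indepNum H (attachPath H v l) Sum.inl Sum.inl_injective Q p hQcard hQne
      ?_ ?_ ?_ ?_ n
    · exact fun a b h => attachPath_adj_inl_inl H v l h
    · intro q hq q' hq' hadj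
      obtain ⟨i, hi, rfl⟩ := hQodd q hq
      obtain ⟨i', hi', rfl⟩ := hQodd q' hq'
      exact attachPath_not_adj_inr_odd H v l hi hi' hadj
    · intro b q hq
      obtain ⟨i, hi, rfl⟩ := hQodd q hq
      simp
    · intro b q hq hadj
      obtain ⟨i, hi, rfl⟩ := hQodd q hq
      exact attachPath_not_adj_inl_inr_odd H v l hi hadj
  have hup : ∀ n, indepNum (strongPow (H ⊕g SimpleGraph.pathGraph l) n) ≤ TT a p n := by
    intro n
    set K : (V ⊕ Fin l) → V ⊕ Fin p :=
      Sum.map id (fun i : Fin l => (⟨i.val / 2, by have := i.isLt; omega⟩ : Fin p)) with hK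
    refine indepNum_le_TT H _ p K ?_ ?_ ?_ n
    · intro u u' c hu hu'
      cases u with
      | inl b => rw [hK] at hu; simp at hu
      | inr i =>
        cases u' with
        | inl b' => rw [hK] at hu'; simp at hu'
        | inr i' =>
          rw [hK] at hu hu'
          simp only [Sum.map_inr, Sum.inr.injEq] at hu hu'
          by_cases hii : i = i'
          · exact Or.inl (by rw [hii])
          · right
            have h1 := congrArg Fin.val hu
            have h2 := congrArg Fin.val hu'
            simp only [] at h1 h2
            have hne : i.val ≠ i'.val := fun h => hii (Fin.ext h)
            have hil := i.isLt
            have hil' := i'.isLt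
            have hpath : (SimpleGraph.pathGraph l).Adj i i' := by
              rw [SimpleGraph.pathGraph_adj]
              omega
            exact hpath
    · intro u u' b hu hu'
      cases u with
      | inl c =>
        cases u' with
        | inl c' =>
          rw [hK] at hu hu'
          simp only [Sum.map_inl, Sum.inl.injEq, id] at hu hu'
          rw [hu, hu']
        | inr i' => rw [hK] at hu'; simp at hu'
      | inr i => rw [hK] at hu; simp at hu
    · intro u u' b b' hu hu' hadj
      cases u with
      | inl c =>
        cases u' with
        | inl c' =>
          rw [hK] at hu hu'
          simp only [Sum.map_inl, Sum.inl.injEq, id] at hu hu'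
          subst hu; subst hu'
          exact hadj
        | inr i' => rw [hK] at hu'; simp at hu'
      | inr i => rw [hK] at hu; simp at hu
  have hmono : ∀ n, indepNum (strongPow (attachPath H v l) n)
      ≤ indepNum (strongPow (H ⊕g SimpleGraph.pathGraph l) n) :=
    fun n => indepNum_strongPow_mono (sum_le_attachPath H v l) n
  have heqTT : ∀ n, indepNum (strongPow (attachPath H v l) n) = TT a p n :=
    fun n => le_antisymm ((hmono n).trans (hup n)) (hlow n)
  have heq2 : ∀ n, indepNum (strongPow (attachPath H v l) n)
      = indepNum (strongPow (H ⊕g SimpleGraph.pathGraph l) n) :=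
    fun n => le_antisymm (hmono n) ((hup n).trans (hlow n))
  have hcapeq : shannonCapacity (attachPath H v l)
      = shannonCapacity (H ⊕g SimpleGraph.pathGraph l) := by
    unfold shannonCapacity
    exact iSup_congr (fun k => by rw [heq2 (k+1)])
  refine ⟨hcapeq, heq2, ?_⟩
  intro k hk
  have ha1 : a 1 = indepNum H := indepNum_strongPow_one H
  have hexm : ∃ m : ℕ,
      (indepNum H : ℝ) < (indepNum (strongPow H (m+1)) : ℝ) ^ ((1:ℝ)/((m:ℝ)+1)) := by
    by_contra hcon
    push_neg at hcon
    have hle : shannonCapacity H ≤ (indepNum H : ℝ) := by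
      unfold shannonCapacity
      exact ciSup_le hcon
    exact absurd hH (not_lt.mpr hle)
  obtain ⟨m, hm⟩ := hexm
  have hseed : a 1 ^ (m+1) < a (m+1) := by
    rw [ha1]
    by_contra hcon
    push_neg at hcon
    have hcast : ((a (m+1) : ℝ)) ≤ ((indepNum H : ℝ)) ^ (m+1) := by exact_mod_cast hcon
    have hle : ((a (m+1) : ℝ)) ^ ((1:ℝ)/((m:ℝ)+1))
        ≤ (((indepNum H : ℝ)) ^ (m+1)) ^ ((1:ℝ)/((m:ℝ)+1)) :=
      Real.rpow_le_rpow (by positivity) hcast (by positivity)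
    have heqq : (((indepNum H : ℝ)) ^ (m+1)) ^ ((1:ℝ)/((m:ℝ)+1)) = (indepNum H : ℝ) := by
      have hc : (1:ℝ)/((m:ℝ)+1) = (((m+1 : ℕ)):ℝ)⁻¹ := by push_cast; rw [one_div]
      rw [hc]
      exact Real.pow_rpow_inv_natCast (by positivity) (Nat.succ_ne_zero m)
    rw [heqq] at hle
    have hmm : (indepNum H : ℝ) < (a (m+1) : ℝ) ^ ((1:ℝ)/((m:ℝ)+1)) := hm
    exact absurd hmm (not_lt.mpr hle)
  set M := m + 1 with hM
  have harith : TT a p k ^ M < TT a p (k * M) :=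
    TT_pow_lt a p k M hp1 hk (by omega) (indepNum_strongPow_zero H)
      (fun i j => indepNum_strongPow_supermul H i j) hseed
  have hTTk_pos : 1 ≤ TT a p k := by
    have hmem : (∅ : Finset (Fin k)) ∈ (Finset.univ : Finset (Fin k)).powerset :=
      Finset.mem_powerset.mpr (Finset.empty_subset _)
    have hterm := Finset.single_le_sum
      (f := fun A : Finset (Fin k) => a A.card * p ^ (k - A.card))
      (fun A _ => Nat.zero_le _) hmem
    have hval : a (∅ : Finset (Fin k)).card * p ^ (k - (∅ : Finset (Fin k)).card)
        = p ^ k := by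
      simp only [Finset.card_empty, Nat.sub_zero, ha]
      rw [indepNum_strongPow_zero H]
      ring
    calc 1 ≤ p ^ k := Nat.one_le_pow _ _ hp1
      _ ≤ TT a p k := by rw [TT, ← hval]; simpa using hterm
  set x : ℝ := (TT a p k : ℝ) with hx
  have hx1 : (1:ℝ) ≤ x := by rw [hx]; exact_mod_cast hTTk_pos
  have hxpos : (0:ℝ) < x := lt_of_lt_of_le zero_lt_one hx1
  have hkM1 : 1 ≤ k * M := by
    have : 1 ≤ M := by omega
    exact Nat.one_le_iff_ne_zero.mpr (by positivity)
  have hcap1 : (TT a p (k*M) : ℝ) ^ ((1:ℝ)/((k*M : ℕ):ℝ))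
      ≤ shannonCapacity (attachPath H v l) := by
    have h := term_le_capacity (attachPath H v l) (k*M) hkM1
    rw [heqTT (k*M)] at h
    exact h
  have hk0 : (k:ℝ) ≠ 0 := Nat.cast_ne_zero.mpr (by omega)
  have hM0 : (M:ℝ) ≠ 0 := Nat.cast_ne_zero.mpr (by omega)
  have hstrict : x ^ ((1:ℝ)/(k:ℝ)) < (TT a p (k*M) : ℝ) ^ ((1:ℝ)/((k*M : ℕ):ℝ)) := by
    have hlt : (x ^ (M:ℕ)) < (TT a p (k*M) : ℝ) := by
      rw [hx]
      exact_mod_cast harith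
    have h2 : ((x ^ (M:ℕ)) : ℝ) ^ ((1:ℝ)/((k*M : ℕ):ℝ))
        < (TT a p (k*M) : ℝ) ^ ((1:ℝ)/((k*M : ℕ):ℝ)) := by
      refine Real.rpow_lt_rpow (by positivity) hlt ?_
      have : (0:ℝ) < ((k*M : ℕ):ℝ) := by exact_mod_cast hkM1
      positivity
    have h3 : ((x ^ (M:ℕ)) : ℝ) ^ ((1:ℝ)/((k*M : ℕ):ℝ)) = x ^ ((1:ℝ)/(k:ℝ)) := by
      rw [← Real.rpow_natCast x M, ← Real.rpow_mul (le_of_lt hxpos)]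
      congr 1
      push_cast
      field_simp
    rw [← h3]
    exact h2
  have hΘ : x ^ ((1:ℝ)/(k:ℝ)) < shannonCapacity (attachPath H v l) :=
    lt_of_lt_of_le hstrict hcap1
  have hbase_nonneg : 0 ≤ x ^ ((1:ℝ)/(k:ℝ)) := Real.rpow_nonneg (le_of_lt hxpos) _
  have hpow := pow_lt_pow_left₀ hΘ hbase_nonneg (by omega : k ≠ 0)
  have hxk : (x ^ ((1:ℝ)/(k:ℝ))) ^ k = x := by
    rw [← Real.rpow_natCast (x ^ ((1:ℝ)/(k:ℝ))) k, ← Real.rpow_mul (le_of_lt hxpos)]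
    rw [one_div, inv_mul_cancel₀ hk0]
    exact Real.rpow_one x
  rw [hxk] at hpow
  rw [heqTT k]
  exact hpow

end Paper
end

section
/- Let q be a prime power and n ≥ 2k ≥ 2. If λ_max = q^{k²}·[n−k choose k]_q and λ_min = −q^{k²−k}·[n−k−1 choose k−1]_q are the largest and smallest adjacency eigenvalues of the q-Kneser graph qK(n,k) on N = [n choose k]_q vertices, then the ratio bound value −N·λ_min/(λ_max − λ_min) equals [n−1 choose k−1]_q. -/
namespace Paper

/-- The Gaussian (q-binomial) coefficient `[n choose k]_q` as a rational number. -/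
def gaussBinom (n k q : ℕ) : ℚ :=
  ∏ i ∈ Finset.range k, (((q : ℚ) ^ n - (q : ℚ) ^ i) / ((q : ℚ) ^ k - (q : ℚ) ^ i))

lemma pow_sub_ne (q : ℕ) (hq : 2 ≤ q) {a b : ℕ} (h : b < a) :
    ((q : ℚ) ^ a - (q : ℚ) ^ b) ≠ 0 := by
  have h1 : (1 : ℚ) < (q : ℚ) := by exact_mod_cast hq
  have := pow_lt_pow_right₀ h1 h
  exact sub_ne_zero_of_ne this.ne'

lemma pow_sub_pos (q : ℕ) (hq : 2 ≤ q) {a b : ℕ} (h : b < a) :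
    (0 : ℚ) < (q : ℚ) ^ a - (q : ℚ) ^ b := by
  have h1 : (1 : ℚ) < (q : ℚ) := by exact_mod_cast hq
  have := pow_lt_pow_right₀ h1 h
  linarith

lemma gaussBinom_pos (q n k : ℕ) (hq : 2 ≤ q) (h : k ≤ n) : 0 < gaussBinom n k q := by
  unfold gaussBinom
  apply Finset.prod_pos
  intro i hi
  have hik : i < k := Finset.mem_range.mp hi
  exact div_pos (pow_sub_pos q hq (lt_of_lt_of_le hik h)) (pow_sub_pos q hq hik)

lemma pascal (q l m : ℕ) (hq : 2 ≤ q) :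
    gaussBinom (l + 1) (m + 1) q
      = gaussBinom l m q * (((q : ℚ) ^ (l + 1) - 1) / ((q : ℚ) ^ (m + 1) - 1)) := by
  have hq0 : (q : ℚ) ≠ 0 := by positivity
  unfold gaussBinom
  rw [Finset.prod_range_succ']
  congr 1
  apply Finset.prod_congr rfl
  intro i hi
  have him : i < m := Finset.mem_range.mp hi
  rw [div_eq_div_iff (pow_sub_ne q hq (by omega)) (pow_sub_ne q hq him)]
  ring

theorem qKneser_ratio_bound (q n k : ℕ) (hq : IsPrimePow q) (hk : 1 ≤ k)
    (hnk : 2 * k ≤ n) :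
    -(gaussBinom n k q) * (-((q : ℚ) ^ (k ^ 2 - k) * gaussBinom (n - k - 1) (k - 1) q)) /
        ((q : ℚ) ^ (k ^ 2) * gaussBinom (n - k) k q
          - (-((q : ℚ) ^ (k ^ 2 - k) * gaussBinom (n - k - 1) (k - 1) q)))
      = gaussBinom (n - 1) (k - 1) q := by
  have hq2 : 2 ≤ q := hq.two_le
  obtain ⟨m, rfl⟩ : ∃ m, k = m + 1 := ⟨k - 1, by omega⟩
  obtain ⟨j, rfl⟩ : ∃ j, n = j + m + 2 := ⟨n - m - 2, by omega⟩
  have hjm : m ≤ j := by omega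
  have e1 : j + m + 2 - (m + 1) - 1 = j := by omega
  have e2 : j + m + 2 - (m + 1) = j + 1 := by omega
  have e3 : j + m + 2 - 1 = j + m + 1 := by omega
  have e4 : (m + 1) ^ 2 - (m + 1) = m ^ 2 + m := by ring_nf; omega
  have e5 : (m + 1) ^ 2 = m ^ 2 + m + (m + 1) := by ring
  rw [e1, e2, e3, e4, e5, Nat.add_sub_cancel]
  have hB : gaussBinom j m q ≠ 0 := (gaussBinom_pos q j m hq2 hjm).ne'
  rw [show j + m + 2 = (j + m + 1) + 1 by ring, pascal q (j + m + 1) m hq2,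
    pascal q j m hq2]
  have hq0 : (q : ℚ) ≠ 0 := by positivity
  have h1 : ((q : ℚ) ^ (m + 1) - 1) ≠ 0 := by
    have := pow_sub_ne q hq2 (a := m + 1) (b := 0) (by omega); simpa using this
  have h2 : ((q : ℚ) ^ (j + 1) - 1) ≠ 0 := by
    have := pow_sub_ne q hq2 (a := j + 1) (b := 0) (by omega); simpa using this
  have h3 : ((q : ℚ) ^ (j + m + 1 + 1) - 1) ≠ 0 := by
    have := pow_sub_ne q hq2 (a := j + m + 2) (b := 0) (by omega); simpa using this
  set B := gaussBinom j m q
  set C := gaussBinom (j + m + 1) m q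
  have hden : (q : ℚ) ^ (m ^ 2 + m + (m + 1)) * (B * (((q : ℚ) ^ (j + 1) - 1) / ((q : ℚ) ^ (m + 1) - 1)))
      - -((q : ℚ) ^ (m ^ 2 + m) * B)
      = (q : ℚ) ^ (m ^ 2 + m) * B * (((q : ℚ) ^ (j + m + 1 + 1) - 1) / ((q : ℚ) ^ (m + 1) - 1)) := by
    field_simp
    ring
  rw [hden]
  have hqp : ((q:ℚ) ^ (m ^ 2 + m)) ≠ 0 := by positivity
  field_simp


end Paper
end

section
/- For every k ∈ ℕ and every finite simple graph G on n vertices, α((G + Ḡ)^{2k}) ≥ C(2k,k) · n^k, where powers are strong powers, + is disjoint union, and Ḡ the complement of G. -/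
namespace Paper

theorem alon_indep_lower_bound {V : Type*} [Fintype V] (G : SimpleGraph V) (k : ℕ) :
    Nat.choose (2 * k) k * Fintype.card V ^ k
      ≤ indepNum (strongPow (G ⊕g Gᶜ) (2 * k)) := by
  classical
  have hcompl : ∀ T : {T : Finset (Fin (2 * k)) // T.card = k}, (T.1ᶜ).card = k := by
    intro T
    have := Finset.card_compl T.1
    simp [T.2, Fintype.card_fin, two_mul] at this ⊢
    omega
  -- the encoding map
  set F : {T : Finset (Fin (2 * k)) // T.card = k} × (Fin k → V) → (Fin (2 * k) → V ⊕ V) :=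
    fun p i =>
      if h : i ∈ p.1.1 then Sum.inl (p.2 ((p.1.1.orderIsoOfFin p.1.2).symm ⟨i, h⟩))
      else Sum.inr (p.2 (((p.1.1ᶜ).orderIsoOfFin (hcompl p.1)).symm ⟨i, by simpa using h⟩))
    with hF
  have hmemL : ∀ p i (h : i ∈ p.1.1),
      F p i = Sum.inl (p.2 ((p.1.1.orderIsoOfFin p.1.2).symm ⟨i, h⟩)) := by
    intro p i h; simp [hF, h]
  have hmemR : ∀ p i (h : i ∉ p.1.1),
      F p i = Sum.inr (p.2 (((p.1.1ᶜ).orderIsoOfFin (hcompl p.1)).symm ⟨i, by simpa using h⟩)) := by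
    intro p i h; simp [hF, h]
  -- evaluation at the canonical positions
  have hevalL : ∀ p (r : Fin k), F p ((p.1.1.orderIsoOfFin p.1.2) r) = Sum.inl (p.2 r) := by
    intro p r
    have hm : ((p.1.1.orderIsoOfFin p.1.2) r : Fin (2 * k)) ∈ p.1.1 :=
      ((p.1.1.orderIsoOfFin p.1.2) r).2
    rw [hmemL p _ hm]
    congr 1
    have : (⟨((p.1.1.orderIsoOfFin p.1.2) r : Fin (2 * k)), hm⟩ : {x // x ∈ p.1.1})
        = (p.1.1.orderIsoOfFin p.1.2) r := Subtype.ext rfl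
    rw [this, OrderIso.symm_apply_apply]
  have hevalR : ∀ p (r : Fin k),
      F p (((p.1.1ᶜ).orderIsoOfFin (hcompl p.1)) r) = Sum.inr (p.2 r) := by
    intro p r
    have hm : (((p.1.1ᶜ).orderIsoOfFin (hcompl p.1)) r : Fin (2 * k)) ∈ p.1.1ᶜ :=
      (((p.1.1ᶜ).orderIsoOfFin (hcompl p.1)) r).2
    have hm' : (((p.1.1ᶜ).orderIsoOfFin (hcompl p.1)) r : Fin (2 * k)) ∉ p.1.1 :=
      Finset.mem_compl.mp hm
    rw [hmemR p _ hm']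
    congr 1
    have : (⟨(((p.1.1ᶜ).orderIsoOfFin (hcompl p.1)) r : Fin (2 * k)), hm⟩ : {x // x ∈ p.1.1ᶜ})
        = ((p.1.1ᶜ).orderIsoOfFin (hcompl p.1)) r := Subtype.ext rfl
    rw [this, OrderIso.symm_apply_apply]
  -- recovering T
  have hT_of : ∀ p q, (∀ i, F p i = F q i ∨ (G ⊕g Gᶜ).Adj (F p i) (F q i)) → p.1 = q.1 := by
    intro p q h
    ext i
    constructor
    · intro hi
      by_contra hj
      have h' := h i
      rw [hmemL p i hi, hmemR q i hj] at h'
      rcases h' with h' | h' <;> simp [SimpleGraph.sum] at h'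
    · intro hi
      by_contra hj
      have h' := h i
      rw [hmemR p i hj, hmemL q i hi] at h'
      rcases h' with h' | h' <;> simp [SimpleGraph.sum] at h'
  -- key: independence
  have hindep : ∀ p q, F p ≠ F q →
      ¬ (strongPow (G ⊕g Gᶜ) (2 * k)).Adj (F p) (F q) := by
    intro p q hne hadj
    rw [strongPow, SimpleGraph.fromRel_adj] at hadj
    obtain ⟨-, hrel⟩ := hadj
    have h : ∀ i, F p i = F q i ∨ (G ⊕g Gᶜ).Adj (F p i) (F q i) := by
      rcases hrel with h | h
      · exact h
      · intro i
        rcases h i with h' | h'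
        · exact Or.inl h'.symm
        · exact Or.inr h'.symm
    have hTQ : p.1 = q.1 := hT_of p q h
    have hfg : p.2 ≠ q.2 := by
      intro hfq
      exact hne (by rw [hF]; funext i; rw [show p = q from Prod.ext hTQ hfq])
    obtain ⟨r, hr⟩ := Function.ne_iff.mp hfg
    obtain ⟨⟨T, hT⟩, f⟩ := p
    obtain ⟨⟨T', hT'⟩, g⟩ := q
    have hTT : T = T' := congrArg Subtype.val hTQ
    subst hTT
    rw [show (⟨T, hT'⟩ : {T : Finset (Fin (2 * k)) // T.card = k}) = ⟨T, hT⟩ from rfl] at h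
    simp only at hr
    -- at the left position
    have h1 := h ((T.orderIsoOfFin hT) r)
    rw [hevalL ⟨⟨T, hT⟩, f⟩ r, hevalL ⟨⟨T, hT⟩, g⟩ r] at h1
    have hGadj : G.Adj (f r) (g r) := by
      rcases h1 with h1 | h1
      · exact absurd (Sum.inl.inj h1) hr
      · simpa [SimpleGraph.sum] using h1
    -- at the right position
    have h2 := h ((Tᶜ.orderIsoOfFin (hcompl ⟨T, hT⟩)) r)
    rw [hevalR ⟨⟨T, hT⟩, f⟩ r, hevalR ⟨⟨T, hT⟩, g⟩ r] at h2
    rcases h2 with h2 | h2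
    · exact hr (Sum.inr.inj h2)
    · have : Gᶜ.Adj (f r) (g r) := by simpa [SimpleGraph.sum] using h2
      exact this.2 hGadj
  -- injectivity
  have hinj : Function.Injective F := by
    intro p q hpq
    have h : ∀ i, F p i = F q i ∨ (G ⊕g Gᶜ).Adj (F p i) (F q i) :=
      fun i => Or.inl (congrFun hpq i)
    have hTQ : p.1 = q.1 := hT_of p q h
    refine Prod.ext hTQ (funext fun r => ?_)
    obtain ⟨⟨T, hT⟩, f⟩ := p
    obtain ⟨⟨T', hT'⟩, g⟩ := q
    have hTT : T = T' := congrArg Subtype.val hTQ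
    subst hTT
    rw [show (⟨T, hT'⟩ : {T : Finset (Fin (2 * k)) // T.card = k}) = ⟨T, hT⟩ from rfl] at hpq
    have := congrFun hpq ((T.orderIsoOfFin hT) r)
    rw [hevalL ⟨⟨T, hT⟩, f⟩ r, hevalL ⟨⟨T, hT⟩, g⟩ r] at this
    exact Sum.inl.inj this
  -- the independent set
  set S : Finset (Fin (2 * k) → V ⊕ V) := Finset.image F Finset.univ with hS
  have hScard : S.card = Nat.choose (2 * k) k * Fintype.card V ^ k := by
    rw [hS, Finset.card_image_of_injective _ hinj, Finset.card_univ]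
    rw [Fintype.card_prod, Fintype.card_finset_len, Fintype.card_fun]
    simp [Fintype.card_fin]
  have hSindep : ∀ a ∈ S, ∀ b ∈ S, a ≠ b →
      ¬ (strongPow (G ⊕g Gᶜ) (2 * k)).Adj a b := by
    intro a ha b hb hab
    obtain ⟨p, -, rfl⟩ := Finset.mem_image.mp ha
    obtain ⟨q, -, rfl⟩ := Finset.mem_image.mp hb
    exact hindep p q hab
  -- conclude via sSup
  rw [indepNum]
  rw [← hScard]
  refine le_csSup ?_ ⟨S, hSindep, rfl⟩
  refine ⟨Fintype.card (Fin (2 * k) → V ⊕ V), ?_⟩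
  rintro x ⟨s, -, rfl⟩
  exact Finset.card_le_univ s

end Paper
end
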